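/- arXiv:1505.06710 — 4 statements merged into one kernel-verified Lean document; each statement's English description precedes it below -/
import Mathlib

section
/- The Catalan matroid is balanced: for every n ≥ 1, every pair of disjoint subsets I, J ⊆ {1,…,2n}, and every pair of distinct elements e, f ∈ {1,…,2n} \ (I ∪ J), the subfamily 𝓓' = {S ∈ 𝓓(n) : I ⊆ S and S ∩ J = ∅} satisfies |𝓓'_e| · |𝓓'_f| ≥ |𝓓'| · |𝓓'_{ef}|, where 𝓓'_e = {S ∈ 𝓓' : e ∈ S} and 𝓓'_{ef} = {S ∈ 𝓓' : e, f ∈ S}. -/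
open scoped Classical

/-- The set of Dyck paths of length `2n`, identified with their up-step sets:
`n`-element subsets `S` of `{1,…,2n}` with `2·|S ∩ {1,…,k}| ≥ k` for all `k`. -/
noncomputable def dyck (n : ℕ) : Finset (Finset ℕ) :=
  (Finset.Icc 1 (2 * n)).powerset.filter fun S =>
    S.card = n ∧ ∀ k ∈ Finset.Icc 1 (2 * n), k ≤ 2 * (S ∩ Finset.Icc 1 k).card

set_option maxHeartbeats 1600000

namespace CatBal

/-- Prefix families: subsets `P ⊆ [1,k]` whose height path stays ≥ 0 and ends at height `h`,
respecting the constraint function `σ`. -/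
noncomputable def PreF (σ : ℕ → Option Bool) (k h : ℕ) : Finset (Finset ℕ) :=
  (Finset.Icc 1 k).powerset.filter fun P =>
    2 * P.card = k + h ∧
    (∀ j ∈ Finset.Icc 1 k, j ≤ 2 * (P ∩ Finset.Icc 1 j).card) ∧
    (∀ j ∈ Finset.Icc 1 k, (σ j = some true → j ∈ P) ∧ (σ j = some false → j ∉ P))

/-- Suffix families: subsets `Q ⊆ [k+1,N]` whose height path starting from `h` stays ≥ 0
and ends at 0, respecting `σ`. -/
noncomputable def SufF (N : ℕ) (σ : ℕ → Option Bool) (k h : ℕ) : Finset (Finset ℕ) :=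
  (Finset.Icc (k+1) N).powerset.filter fun Q =>
    2 * Q.card + h = N - k ∧
    (∀ j ∈ Finset.Icc (k+1) N, j - k ≤ 2 * (Q ∩ Finset.Icc (k+1) j).card + h) ∧
    (∀ j ∈ Finset.Icc (k+1) N, (σ j = some true → j ∈ Q) ∧ (σ j = some false → j ∉ Q))

lemma mem_PreF {σ k h P} : P ∈ PreF σ k h ↔
    P ⊆ Finset.Icc 1 k ∧ 2 * P.card = k + h ∧
    (∀ j ∈ Finset.Icc 1 k, j ≤ 2 * (P ∩ Finset.Icc 1 j).card) ∧
    (∀ j ∈ Finset.Icc 1 k, (σ j = some true → j ∈ P) ∧ (σ j = some false → j ∉ P)) := by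
  simp [PreF, Finset.mem_filter, Finset.mem_powerset, and_assoc]

lemma mem_SufF {N σ k h Q} : Q ∈ SufF N σ k h ↔
    Q ⊆ Finset.Icc (k+1) N ∧ 2 * Q.card + h = N - k ∧
    (∀ j ∈ Finset.Icc (k+1) N, j - k ≤ 2 * (Q ∩ Finset.Icc (k+1) j).card + h) ∧
    (∀ j ∈ Finset.Icc (k+1) N, (σ j = some true → j ∈ Q) ∧ (σ j = some false → j ∉ Q)) := by
  simp [SufF, Finset.mem_filter, Finset.mem_powerset, and_assoc]

lemma PreF_congr {σ σ' : ℕ → Option Bool} (k h : ℕ)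
    (hσ : ∀ j ∈ Finset.Icc 1 k, σ j = σ' j) : PreF σ k h = PreF σ' k h := by
  ext P
  rw [mem_PreF, mem_PreF]
  constructor <;> rintro ⟨h0, h1, h2, h3⟩ <;> refine ⟨h0, h1, h2, fun j hj => ?_⟩
  · rw [← hσ j hj]; exact h3 j hj
  · rw [hσ j hj]; exact h3 j hj

lemma SufF_congr {N : ℕ} {σ σ' : ℕ → Option Bool} (k h : ℕ)
    (hσ : ∀ j ∈ Finset.Icc (k+1) N, σ j = σ' j) : SufF N σ k h = SufF N σ' k h := by
  ext P
  rw [mem_SufF, mem_SufF]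
  constructor <;> rintro ⟨h0, h1, h2, h3⟩ <;> refine ⟨h0, h1, h2, fun j hj => ?_⟩
  · rw [← hσ j hj]; exact h3 j hj
  · rw [hσ j hj]; exact h3 j hj

lemma PreF_vanish {σ k h} (hkh : k < h) : (PreF σ k h).card = 0 := by
  rw [Finset.card_eq_zero, Finset.eq_empty_iff_forall_notMem]
  intro P hP
  rw [mem_PreF] at hP
  have h1 : P.card ≤ k := by
    have := Finset.card_le_card hP.1
    simpa [Nat.card_Icc] using this
  omega

lemma SufF_vanish {N σ k h} (hkh : N - k < h) : (SufF N σ k h).card = 0 := by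
  rw [Finset.card_eq_zero, Finset.eq_empty_iff_forall_notMem]
  intro Q hQ
  rw [mem_SufF] at hQ
  omega

lemma PreF_zero (σ h) : (PreF σ 0 h).card = if h = 0 then 1 else 0 := by
  have : Finset.Icc 1 0 = (∅ : Finset ℕ) := by simp
  split_ifs with hh
  · subst hh
    rw [Finset.card_eq_one]
    refine ⟨∅, ?_⟩
    rw [Finset.eq_singleton_iff_unique_mem]
    constructor
    · rw [mem_PreF]; simp [this]
    · intro P hP
      rw [mem_PreF, this] at hP
      simpa using hP.1
  · rw [Finset.card_eq_zero, Finset.eq_empty_iff_forall_notMem]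
    intro P hP
    rw [mem_PreF, this] at hP
    have : P = ∅ := by simpa using hP.1
    subst this
    simp at hP
    omega

lemma SufF_last (N σ h) : (SufF N σ N h).card = if h = 0 then 1 else 0 := by
  have : Finset.Icc (N+1) N = (∅ : Finset ℕ) := by
    rw [Finset.Icc_eq_empty]; omega
  split_ifs with hh
  · subst hh
    rw [Finset.card_eq_one]
    refine ⟨∅, ?_⟩
    rw [Finset.eq_singleton_iff_unique_mem]
    constructor
    · rw [mem_SufF]; simp [this]
    · intro Q hQ
      rw [mem_SufF, this] at hQ
      simpa using hQ.1
  · rw [Finset.card_eq_zero, Finset.eq_empty_iff_forall_notMem]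
    intro Q hQ
    rw [mem_SufF, this] at hQ
    have : Q = ∅ := by simpa using hQ.1
    subst this
    simp at hQ
    omega

lemma PreF_peel (σ : ℕ → Option Bool) (k h : ℕ) :
    (PreF σ (k+1) h).card =
    (if σ (k+1) = some false then 0 else if h = 0 then 0 else (PreF σ k (h-1)).card) +
    (if σ (k+1) = some true then 0 else (PreF σ k (h+1)).card) := by
  have hsplit := Finset.card_filter_add_card_filter_not
    (s := PreF σ (k+1) h) (p := fun P => (k+1) ∈ P)
  rw [← hsplit]
  congr 1
  -- half 1 : k+1 ∈ P
  · by_cases hσf : σ (k+1) = some false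
    · rw [if_pos hσf, Finset.card_eq_zero, Finset.eq_empty_iff_forall_notMem]
      intro P hP
      rw [Finset.mem_filter, mem_PreF] at hP
      exact (hP.1.2.2.2 (k+1) (by simp [Finset.mem_Icc]) ).2 hσf hP.2
    · rw [if_neg hσf]
      by_cases hh : h = 0
      · subst hh
        rw [if_pos rfl, Finset.card_eq_zero, Finset.eq_empty_iff_forall_notMem]
        intro P hP
        rw [Finset.mem_filter, mem_PreF] at hP
        obtain ⟨⟨hsub, hcard, hdyck, -⟩, hmem⟩ := hP
        rcases Nat.eq_zero_or_pos k with hk | hk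
        · subst hk; omega
        · have hPk : P ∩ Finset.Icc 1 k = P.erase (k+1) := by
            ext x
            simp only [Finset.mem_inter, Finset.mem_Icc, Finset.mem_erase]
            constructor
            · rintro ⟨hx, h1, h2⟩; exact ⟨by omega, hx⟩
            · rintro ⟨hne, hx⟩
              have hx2 := hsub hx
              simp only [Finset.mem_Icc] at hx2
              exact ⟨hx, by omega⟩
          have hd := hdyck k (by simp [Finset.mem_Icc]; omega)
          rw [hPk, Finset.card_erase_of_mem hmem] at hd
          have hP1 : 1 ≤ P.card := Finset.card_pos.2 ⟨k+1, hmem⟩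
          omega
      · rw [if_neg hh]
        refine Finset.card_bij' (fun P _ => P.erase (k+1)) (fun P _ => insert (k+1) P) ?hi ?hj ?li ?ri
        case hi =>
          intro P hP
          rw [Finset.mem_filter, mem_PreF] at hP
          obtain ⟨⟨hsub, hcard, hdyck, hσm⟩, hmem⟩ := hP
          rw [mem_PreF]
          refine ⟨?_, ?_, ?_, ?_⟩
          · intro x hx
            rw [Finset.mem_erase] at hx
            have := hsub hx.2
            simp only [Finset.mem_Icc] at this ⊢
            omega
          · rw [Finset.card_erase_of_mem hmem]
            have hP1 : 1 ≤ P.card := Finset.card_pos.2 ⟨k+1, hmem⟩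
            omega
          · intro j hj
            simp only [Finset.mem_Icc] at hj
            have heq : P.erase (k+1) ∩ Finset.Icc 1 j = P ∩ Finset.Icc 1 j := by
              ext x
              simp only [Finset.mem_inter, Finset.mem_erase, Finset.mem_Icc]
              constructor
              · rintro ⟨⟨-, hx⟩, h1, h2⟩; exact ⟨hx, h1, h2⟩
              · rintro ⟨hx, h1, h2⟩; exact ⟨⟨by omega, hx⟩, h1, h2⟩
            rw [heq]
            exact hdyck j (by simp [Finset.mem_Icc]; omega)
          · intro j hj
            simp only [Finset.mem_Icc] at hj
            have h0 := hσm j (by simp [Finset.mem_Icc]; omega)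
            constructor
            · intro ht
              rw [Finset.mem_erase]
              exact ⟨by omega, h0.1 ht⟩
            · intro hf hmem'
              exact h0.2 hf (Finset.mem_of_mem_erase hmem')
        case hj =>
          intro P hP
          rw [mem_PreF] at hP
          obtain ⟨hsub, hcard, hdyck, hσm⟩ := hP
          have hnm : (k+1) ∉ P := fun hc => by
            have := hsub hc; simp only [Finset.mem_Icc] at this; omega
          rw [Finset.mem_filter, mem_PreF]
          refine ⟨⟨?_, ?_, ?_, ?_⟩, Finset.mem_insert_self _ _⟩
          · intro x hx
            rcases Finset.mem_insert.1 hx with rfl | hx'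
            · simp [Finset.mem_Icc]
            · have := hsub hx'
              simp only [Finset.mem_Icc] at this ⊢
              omega
          · rw [Finset.card_insert_of_notMem hnm]
            omega
          · intro j hj
            simp only [Finset.mem_Icc] at hj
            rcases Nat.lt_or_ge j (k+1) with hjk | hjk
            · have heq : insert (k+1) P ∩ Finset.Icc 1 j = P ∩ Finset.Icc 1 j := by
                ext x
                simp only [Finset.mem_inter, Finset.mem_insert, Finset.mem_Icc]
                constructor
                · rintro ⟨rfl | hx, h1, h2⟩
                  · omega
                  · exact ⟨hx, h1, h2⟩
                · rintro ⟨hx, h1, h2⟩; exact ⟨Or.inr hx, h1, h2⟩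
              rw [heq]
              exact hdyck j (by simp [Finset.mem_Icc]; omega)
            · have hj1 : j = k+1 := by omega
              subst hj1
              have heq : insert (k+1) P ∩ Finset.Icc 1 (k+1) = insert (k+1) P := by
                apply Finset.inter_eq_left.2
                intro x hx
                rcases Finset.mem_insert.1 hx with rfl | hx'
                · simp [Finset.mem_Icc]
                · have := hsub hx'
                  simp only [Finset.mem_Icc] at this ⊢
                  omega
              rw [heq, Finset.card_insert_of_notMem hnm]
              omega
          · intro j hj
            simp only [Finset.mem_Icc] at hj
            rcases Nat.lt_or_ge j (k+1) with hjk | hjk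
            · have h0 := hσm j (by simp [Finset.mem_Icc]; omega)
              constructor
              · intro ht; exact Finset.mem_insert_of_mem (h0.1 ht)
              · intro hf hmem'
                rcases Finset.mem_insert.1 hmem' with rfl | hx'
                · omega
                · exact h0.2 hf hx'
            · have hj1 : j = k+1 := by omega
              subst hj1
              exact ⟨fun _ => Finset.mem_insert_self _ _, fun hf => absurd hf hσf⟩
        case li =>
          intro P hP
          rw [Finset.mem_filter] at hP
          exact Finset.insert_erase hP.2
        case ri =>
          intro P hP
          rw [mem_PreF] at hP
          have hnm : (k+1) ∉ P := fun hc => by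
            have := hP.1 hc; simp only [Finset.mem_Icc] at this; omega
          exact Finset.erase_insert hnm
  -- half 2 : k+1 ∉ P
  · by_cases hσt : σ (k+1) = some true
    · rw [if_pos hσt, Finset.card_eq_zero, Finset.eq_empty_iff_forall_notMem]
      intro P hP
      rw [Finset.mem_filter, mem_PreF] at hP
      exact hP.2 ((hP.1.2.2.2 (k+1) (by simp [Finset.mem_Icc])).1 hσt)
    · rw [if_neg hσt]
      congr 1
      ext P
      rw [Finset.mem_filter, mem_PreF, mem_PreF]
      constructor
      · rintro ⟨⟨hsub, hcard, hdyck, hσm⟩, hnot⟩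
        refine ⟨?_, by omega, ?_, ?_⟩
        · intro x hx
          have := hsub hx
          simp only [Finset.mem_Icc] at this ⊢
          rcases Nat.lt_or_ge x (k+1) with h' | h'
          · omega
          · exfalso; apply hnot; have : x = k+1 := by omega
            subst this; exact hx
        · intro j hj
          simp only [Finset.mem_Icc] at hj
          exact hdyck j (by simp [Finset.mem_Icc]; omega)
        · intro j hj
          simp only [Finset.mem_Icc] at hj
          exact hσm j (by simp [Finset.mem_Icc]; omega)
      · rintro ⟨hsub, hcard, hdyck, hσm⟩
        have hnm : (k+1) ∉ P := fun hc => by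
          have := hsub hc; simp only [Finset.mem_Icc] at this; omega
        refine ⟨⟨?_, by omega, ?_, ?_⟩, hnm⟩
        · intro x hx
          have := hsub hx
          simp only [Finset.mem_Icc] at this ⊢
          omega
        · intro j hj
          simp only [Finset.mem_Icc] at hj
          rcases Nat.lt_or_ge j (k+1) with hjk | hjk
          · exact hdyck j (by simp [Finset.mem_Icc]; omega)
          · have hj1 : j = k+1 := by omega
            subst hj1
            have heq : P ∩ Finset.Icc 1 (k+1) = P := by
              apply Finset.inter_eq_left.2
              intro x hx
              have := hsub hx
              simp only [Finset.mem_Icc] at this ⊢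
              omega
            rw [heq]
            omega
        · intro j hj
          simp only [Finset.mem_Icc] at hj
          rcases Nat.lt_or_ge j (k+1) with hjk | hjk
          · exact hσm j (by simp [Finset.mem_Icc]; omega)
          · have hj1 : j = k+1 := by omega
            subst hj1
            exact ⟨fun ht => absurd ht hσt, fun _ => hnm⟩


lemma SufF_peel (N : ℕ) (σ : ℕ → Option Bool) (k h : ℕ) (hk : k < N) :
    (SufF N σ k h).card =
    (if σ (k+1) = some false then 0 else (SufF N σ (k+1) (h+1)).card) +
    (if σ (k+1) = some true then 0 else if h = 0 then 0 else (SufF N σ (k+1) (h-1)).card) := by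
  have hsplit := Finset.card_filter_add_card_filter_not
    (s := SufF N σ k h) (p := fun Q => (k+1) ∈ Q)
  rw [← hsplit]
  have hk1N : (k+1) ∈ Finset.Icc (k+1) N := by simp [Finset.mem_Icc]; omega
  congr 1
  -- half 1 : k+1 ∈ Q, erase bijection with SufF (k+1) (h+1)
  · by_cases hσf : σ (k+1) = some false
    · rw [if_pos hσf, Finset.card_eq_zero, Finset.eq_empty_iff_forall_notMem]
      intro Q hQ
      rw [Finset.mem_filter, mem_SufF] at hQ
      exact (hQ.1.2.2.2 (k+1) hk1N).2 hσf hQ.2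
    · rw [if_neg hσf]
      refine Finset.card_bij' (fun Q _ => Q.erase (k+1)) (fun Q _ => insert (k+1) Q) ?hi ?hj ?li ?ri
      case hi =>
        intro Q hQ
        show Q.erase (k+1) ∈ SufF N σ (k+1) (h+1)
        rw [Finset.mem_filter, mem_SufF] at hQ
        obtain ⟨⟨hsub, hcard, hdyck, hσm⟩, hmem⟩ := hQ
        have hQ1 : 1 ≤ Q.card := Finset.card_pos.2 ⟨k+1, hmem⟩
        rw [mem_SufF]
        refine ⟨?_, ?_, ?_, ?_⟩
        · intro x hx
          rw [Finset.mem_erase] at hx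
          have := hsub hx.2
          simp only [Finset.mem_Icc] at this ⊢
          omega
        · rw [Finset.card_erase_of_mem hmem]
          omega
        · intro j hj
          simp only [Finset.mem_Icc] at hj
          have heq : Q ∩ Finset.Icc (k+1) j = insert (k+1) (Q.erase (k+1) ∩ Finset.Icc (k+1+1) j) := by
            ext x
            simp only [Finset.mem_inter, Finset.mem_insert, Finset.mem_erase, Finset.mem_Icc]
            constructor
            · rintro ⟨hx, h1, h2⟩
              rcases Nat.eq_or_lt_of_le h1 with heq' | h1'
              · left; omega
              · right; exact ⟨⟨by omega, hx⟩, by omega, h2⟩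
            · rintro (rfl | ⟨⟨hne, hx⟩, h1, h2⟩)
              · exact ⟨hmem, le_refl _, by omega⟩
              · exact ⟨hx, by omega, h2⟩
          have hnm2 : (k+1) ∉ Q.erase (k+1) ∩ Finset.Icc (k+1+1) j := by
            simp [Finset.mem_erase]
          have hd := hdyck j (by simp [Finset.mem_Icc]; omega)
          rw [heq, Finset.card_insert_of_notMem hnm2] at hd
          omega
        · intro j hj
          simp only [Finset.mem_Icc] at hj
          have h0 := hσm j (by simp [Finset.mem_Icc]; omega)
          constructor
          · intro ht
            rw [Finset.mem_erase]
            exact ⟨by omega, h0.1 ht⟩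
          · intro hf hmem'
            exact h0.2 hf (Finset.mem_of_mem_erase hmem')
      case hj =>
        intro Q hQ
        show insert (k+1) Q ∈ Finset.filter (fun Q => (k+1) ∈ Q) (SufF N σ k h)
        rw [mem_SufF] at hQ
        obtain ⟨hsub, hcard, hdyck, hσm⟩ := hQ
        have hnm : (k+1) ∉ Q := fun hc => by
          have := hsub hc; simp only [Finset.mem_Icc] at this; omega
        rw [Finset.mem_filter, mem_SufF]
        refine ⟨⟨?_, ?_, ?_, ?_⟩, Finset.mem_insert_self _ _⟩
        · intro x hx
          rcases Finset.mem_insert.1 hx with rfl | hx'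
          · exact hk1N
          · have := hsub hx'
            simp only [Finset.mem_Icc] at this ⊢
            omega
        · rw [Finset.card_insert_of_notMem hnm]
          omega
        · intro j hj
          simp only [Finset.mem_Icc] at hj
          rcases Nat.lt_or_ge j (k+1+1) with hjk | hjk
          · have hj1 : j = k+1 := by omega
            subst hj1
            have heq : insert (k+1) Q ∩ Finset.Icc (k+1) (k+1) = {k+1} := by
              ext x
              simp only [Finset.mem_inter, Finset.mem_insert, Finset.mem_Icc,
                Finset.mem_singleton]
              constructor
              · rintro ⟨-, h1, h2⟩; omega
              · rintro rfl; exact ⟨Or.inl rfl, le_refl _, le_refl _⟩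
            rw [heq]
            simp only [Finset.card_singleton]
            omega
          · have heq : insert (k+1) Q ∩ Finset.Icc (k+1) j
                = insert (k+1) (Q ∩ Finset.Icc (k+1+1) j) := by
              ext x
              simp only [Finset.mem_inter, Finset.mem_insert, Finset.mem_Icc]
              constructor
              · rintro ⟨rfl | hx, h1, h2⟩
                · exact Or.inl rfl
                · right
                  have := hsub hx
                  simp only [Finset.mem_Icc] at this
                  exact ⟨hx, by omega, h2⟩
              · rintro (rfl | ⟨hx, h1, h2⟩)
                · exact ⟨Or.inl rfl, le_refl _, by omega⟩
                · exact ⟨Or.inr hx, by omega, h2⟩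
            have hnm2 : (k+1) ∉ Q ∩ Finset.Icc (k+1+1) j := by
              simp only [Finset.mem_inter, Finset.mem_Icc]
              rintro ⟨-, hc, -⟩; omega
            rw [heq, Finset.card_insert_of_notMem hnm2]
            have hd := hdyck j (by simp [Finset.mem_Icc]; omega)
            omega
        · intro j hj
          simp only [Finset.mem_Icc] at hj
          rcases Nat.lt_or_ge j (k+1+1) with hjk | hjk
          · have hj1 : j = k+1 := by omega
            subst hj1
            exact ⟨fun _ => Finset.mem_insert_self _ _, fun hf => absurd hf hσf⟩
          · have h0 := hσm j (by simp [Finset.mem_Icc]; omega)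
            constructor
            · intro ht; exact Finset.mem_insert_of_mem (h0.1 ht)
            · intro hf hmem'
              rcases Finset.mem_insert.1 hmem' with rfl | hx'
              · omega
              · exact h0.2 hf hx'
      case li =>
        intro Q hQ
        rw [Finset.mem_filter] at hQ
        exact Finset.insert_erase hQ.2
      case ri =>
        intro Q hQ
        rw [mem_SufF] at hQ
        have hnm : (k+1) ∉ Q := fun hc => by
          have := hQ.1 hc; simp only [Finset.mem_Icc] at this; omega
        exact Finset.erase_insert hnm
  -- half 2 : k+1 ∉ Q
  · by_cases hσt : σ (k+1) = some true
    · rw [if_pos hσt, Finset.card_eq_zero, Finset.eq_empty_iff_forall_notMem]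
      intro Q hQ
      rw [Finset.mem_filter, mem_SufF] at hQ
      exact hQ.2 ((hQ.1.2.2.2 (k+1) hk1N).1 hσt)
    · rw [if_neg hσt]
      by_cases hh : h = 0
      · subst hh
        rw [if_pos rfl, Finset.card_eq_zero, Finset.eq_empty_iff_forall_notMem]
        intro Q hQ
        rw [Finset.mem_filter, mem_SufF] at hQ
        obtain ⟨⟨hsub, hcard, hdyck, -⟩, hnot⟩ := hQ
        have hd := hdyck (k+1) hk1N
        have heq : Q ∩ Finset.Icc (k+1) (k+1) = ∅ := by
          ext x
          simp only [Finset.mem_inter, Finset.mem_Icc, Finset.notMem_empty, iff_false]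
          rintro ⟨hx, h1, h2⟩
          have : x = k+1 := by omega
          subst this
          exact hnot hx
        rw [heq] at hd
        simp only [Finset.card_empty] at hd
        omega
      · rw [if_neg hh]
        congr 1
        ext Q
        rw [Finset.mem_filter, mem_SufF, mem_SufF]
        constructor
        · rintro ⟨⟨hsub, hcard, hdyck, hσm⟩, hnot⟩
          refine ⟨?_, by omega, ?_, ?_⟩
          · intro x hx
            have := hsub hx
            simp only [Finset.mem_Icc] at this ⊢
            rcases Nat.lt_or_ge x (k+1+1) with h' | h'
            · exfalso
              have : x = k+1 := by omega
              subst this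
              exact hnot hx
            · omega
          · intro j hj
            simp only [Finset.mem_Icc] at hj
            have heq : Q ∩ Finset.Icc (k+1+1) j = Q ∩ Finset.Icc (k+1) j := by
              ext x
              simp only [Finset.mem_inter, Finset.mem_Icc]
              constructor
              · rintro ⟨hx, h1, h2⟩; exact ⟨hx, by omega, h2⟩
              · rintro ⟨hx, h1, h2⟩
                refine ⟨hx, ?_, h2⟩
                rcases Nat.eq_or_lt_of_le h1 with heq' | h1'
                · exfalso; have : x = k+1 := by omega
                  subst this; exact hnot hx
                · omega
            rw [heq]
            have hd := hdyck j (by simp [Finset.mem_Icc]; omega)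
            omega
          · intro j hj
            simp only [Finset.mem_Icc] at hj
            exact hσm j (by simp [Finset.mem_Icc]; omega)
        · rintro ⟨hsub, hcard, hdyck, hσm⟩
          have hnm : (k+1) ∉ Q := fun hc => by
            have := hsub hc; simp only [Finset.mem_Icc] at this; omega
          refine ⟨⟨?_, by omega, ?_, ?_⟩, hnm⟩
          · intro x hx
            have := hsub hx
            simp only [Finset.mem_Icc] at this ⊢
            omega
          · intro j hj
            simp only [Finset.mem_Icc] at hj
            rcases Nat.lt_or_ge j (k+1+1) with hjk | hjk
            · have hj1 : j = k+1 := by omega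
              subst hj1
              omega
            · have heq : Q ∩ Finset.Icc (k+1) j = Q ∩ Finset.Icc (k+1+1) j := by
                ext x
                simp only [Finset.mem_inter, Finset.mem_Icc]
                constructor
                · rintro ⟨hx, h1, h2⟩
                  refine ⟨hx, ?_, h2⟩
                  have := hsub hx
                  simp only [Finset.mem_Icc] at this
                  omega
                · rintro ⟨hx, h1, h2⟩; exact ⟨hx, by omega, h2⟩
              rw [heq]
              have hd := hdyck j (by simp [Finset.mem_Icc]; omega)
              omega
          · intro j hj
            simp only [Finset.mem_Icc] at hj
            rcases Nat.lt_or_ge j (k+1+1) with hjk | hjk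
            · have hj1 : j = k+1 := by omega
              subst hj1
              exact ⟨fun ht => absurd ht hσt, fun _ => hnm⟩
            · exact hσm j (by simp [Finset.mem_Icc]; omega)


/-- Log-concavity (with spread), restricted to a parity class. -/
def LCseq (x : ℕ → ℕ) : Prop :=
  ∀ p q, p ≤ q → p % 2 = q % 2 → x p * x (q+2) ≤ x (p+2) * x q

/-- Coupled TP₂ property of a pair of sequences, restricted to a parity class. -/
def TPpair (u v : ℕ → ℕ) : Prop :=
  ∀ p q, p ≤ q → p % 2 = q % 2 → u q * v p ≤ u p * v q

lemma LC_up {A : ℕ → ℕ} (hA : LCseq A) :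
    LCseq (fun p => if p = 0 then 0 else A (p-1)) := by
  intro p q hpq hpar
  by_cases hp : p = 0
  · simp [hp]
  · have hq : ¬ q = 0 := by omega
    simp only [if_neg hp, if_neg hq, if_neg (show ¬ p+2 = 0 by omega),
      if_neg (show ¬ q+2 = 0 by omega)]
    rw [show q+2-1 = (q-1)+2 by omega, show p+2-1 = (p-1)+2 by omega]
    exact hA (p-1) (q-1) (by omega) (by omega)

lemma LC_down {A : ℕ → ℕ} (hA : LCseq A) : LCseq (fun p => A (p+1)) := by
  intro p q hpq hpar
  simp only
  rw [show q+2+1 = (q+1)+2 by omega, show p+2+1 = (p+1)+2 by omega]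
  exact hA (p+1) (q+1) (by omega) (by omega)

lemma LC_free {A : ℕ → ℕ} (hA : LCseq A) :
    LCseq (fun p => (if p = 0 then 0 else A (p-1)) + A (p+1)) := by
  intro p q hpq hpar
  simp only [if_neg (show ¬ p+2 = 0 by omega), if_neg (show ¬ q+2 = 0 by omega),
    show p+2-1 = p+1 by omega, show q+2-1 = q+1 by omega,
    show p+2+1 = p+3 by omega, show q+2+1 = q+3 by omega]
  have e3 : A (p+1) * A (q+3) ≤ A (p+3) * A (q+1) := by
    have := hA (p+1) (q+1) (by omega) (by omega)
    rwa [show q+1+2 = q+3 by omega, show p+1+2 = p+3 by omega] at this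
  by_cases hp : p = 0
  · subst hp
    norm_num at e3 ⊢
    by_cases hq : q = 0
    · subst hq
      norm_num
      nlinarith [e3, mul_comm (A 1) (A 3)]
    · simp only [if_neg hq]
      nlinarith [e3]
  · have hq : ¬ q = 0 := by omega
    simp only [if_neg hp, if_neg hq]
    have e1 : A (p-1) * A (q+1) ≤ A (p+1) * A (q-1) := by
      have := hA (p-1) (q-1) (by omega) (by omega)
      rwa [show q-1+2 = q+1 by omega, show p-1+2 = p+1 by omega] at this
    have e2 : A (p-1) * A (q+3) ≤ A (p+3) * A (q-1) := by
      rcases Nat.eq_or_lt_of_le hpq with rfl | hlt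
      · rw [mul_comm]
      · have hp2 : p + 2 ≤ q := by omega
        have s1 : A (p-1) * A (q+3) ≤ A (p+1) * A (q+1) := by
          have := hA (p-1) (q+1) (by omega) (by omega)
          rwa [show q+1+2 = q+3 by omega, show p-1+2 = p+1 by omega] at this
        have s2 : A (p+1) * A (q+1) ≤ A (p+3) * A (q-1) := by
          have := hA (p+1) (q-1) (by omega) (by omega)
          rwa [show q-1+2 = q+1 by omega, show p+1+2 = p+3 by omega] at this
        exact le_trans s1 s2
    nlinarith [e1, e2, e3]

lemma TP_up {u v : ℕ → ℕ} (h : TPpair u v) :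
    TPpair (fun p => u (p+1)) (fun p => v (p+1)) := by
  intro p q hpq hpar
  exact h (p+1) (q+1) (by omega) (by omega)

lemma TP_down {u v : ℕ → ℕ} (h : TPpair u v) :
    TPpair (fun p => if p = 0 then 0 else u (p-1)) (fun p => if p = 0 then 0 else v (p-1)) := by
  intro p q hpq hpar
  by_cases hp : p = 0
  · simp [hp]
  · have hq : ¬ q = 0 := by omega
    simp only [if_neg hp, if_neg hq]
    exact h (p-1) (q-1) (by omega) (by omega)

lemma TP_free {u v : ℕ → ℕ} (h : TPpair u v) :
    TPpair (fun p => u (p+1) + if p = 0 then 0 else u (p-1))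
           (fun p => v (p+1) + if p = 0 then 0 else v (p-1)) := by
  intro p q hpq hpar
  simp only
  have t1 : u (q+1) * v (p+1) ≤ u (p+1) * v (q+1) := h (p+1) (q+1) (by omega) (by omega)
  by_cases hp : p = 0
  · subst hp
    norm_num at t1 ⊢
    by_cases hq : q = 0
    · subst hq; norm_num
    · simp only [if_neg hq]
      have hq2 : 2 ≤ q := by omega
      have t2 : u (q-1) * v 1 ≤ u 1 * v (q-1) := h 1 (q-1) (by omega) (by omega)
      nlinarith [t1, t2]
  · have hq : ¬ q = 0 := by omega
    simp only [if_neg hp, if_neg hq]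
    have t4 : u (q-1) * v (p-1) ≤ u (p-1) * v (q-1) := h (p-1) (q-1) (by omega) (by omega)
    have cross : u (q+1) * v (p-1) + u (q-1) * v (p+1)
        ≤ u (p-1) * v (q+1) + u (p+1) * v (q-1) := by
      rcases Nat.eq_or_lt_of_le hpq with rfl | hlt
      · nlinarith [mul_comm (u (p+1)) (v (p-1))]
      · have hp2 : p + 2 ≤ q := by omega
        have c1 : u (q+1) * v (p-1) ≤ u (p-1) * v (q+1) := h (p-1) (q+1) (by omega) (by omega)
        have c2 : u (q-1) * v (p+1) ≤ u (p+1) * v (q-1) := h (p+1) (q-1) (by omega) (by omega)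
        exact add_le_add c1 c2
    nlinarith [t1, t4, cross]

lemma LC_delta : LCseq (fun h => if h = 0 then 1 else 0) := by
  intro p q hpq hpar
  simp only [if_neg (show ¬ q+2 = 0 by omega)]
  simp


lemma shiftA (A B : ℕ → ℕ) (R : ℕ) (hA : A (R+1) = 0) :
    ∑ h ∈ Finset.range (R+2), A h * B (h+1)
      = ∑ h ∈ Finset.range (R+2), (if h = 0 then 0 else A (h-1)) * B h := by
  rw [Finset.sum_range_succ' (fun h => (if h = 0 then 0 else A (h-1)) * B h) (R+1)]
  rw [Finset.sum_range_succ (fun h => A h * B (h+1)) (R+1)]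
  simp only [Nat.add_sub_cancel, if_neg (Nat.succ_ne_zero _), if_pos rfl, if_true, zero_mul,
    add_zero, hA, zero_mul]

lemma shiftB (A B : ℕ → ℕ) (R : ℕ) (hA : A (R+2) = 0) :
    ∑ h ∈ Finset.range (R+2), A h * (if h = 0 then 0 else B (h-1))
      = ∑ h ∈ Finset.range (R+2), A (h+1) * B h := by
  rw [Finset.sum_range_succ' (fun h => A h * (if h = 0 then 0 else B (h-1))) (R+1)]
  rw [Finset.sum_range_succ (fun h => A (h+1) * B h) (R+1)]
  simp only [Nat.add_sub_cancel, if_neg (Nat.succ_ne_zero _), if_pos rfl, if_true, mul_zero,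
    add_zero, hA, zero_mul]

lemma glue (N : ℕ) (σ : ℕ → Option Bool) :
    ∀ d k, k + d = N →
      (PreF σ N 0).card
        = ∑ h ∈ Finset.range (N+2), (PreF σ k h).card * (SufF N σ k h).card := by
  intro d
  induction d with
  | zero =>
    intro k hk
    obtain rfl : k = N := by omega
    rw [Finset.sum_eq_single 0]
    · rw [SufF_last]; simp
    · intro b _ hb
      rw [SufF_last, if_neg hb, mul_zero]
    · intro h0
      exact absurd (Finset.mem_range.2 (by omega)) h0
  | succ d ih =>
    intro k hk
    have hkN : k < N := by omega
    rw [ih (k+1) (by omega)]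
    have key : ∑ h ∈ Finset.range (N+2), (PreF σ k h).card * (SufF N σ k h).card
        = ∑ h ∈ Finset.range (N+2), (PreF σ (k+1) h).card * (SufF N σ (k+1) h).card := by
      have hv1 : (PreF σ k (N+1)).card = 0 := PreF_vanish (by omega)
      have hv2 : (PreF σ k (N+2)).card = 0 := PreF_vanish (by omega)
      calc ∑ h ∈ Finset.range (N+2), (PreF σ k h).card * (SufF N σ k h).card
          = ∑ h ∈ Finset.range (N+2), (PreF σ k h).card *
              ((if σ (k+1) = some false then 0 else (SufF N σ (k+1) (h+1)).card) +
               (if σ (k+1) = some true then 0 else if h = 0 then 0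
                  else (SufF N σ (k+1) (h-1)).card)) := by
            apply Finset.sum_congr rfl
            intro h _
            rw [SufF_peel N σ k h hkN]
        _ = ∑ h ∈ Finset.range (N+2),
              ((if σ (k+1) = some false then 0 else if h = 0 then 0
                  else (PreF σ k (h-1)).card) +
               (if σ (k+1) = some true then 0 else (PreF σ k (h+1)).card)) *
              (SufF N σ (k+1) h).card := by
            rcases hσ : σ (k+1) with _ | b
            · simp only [hσ, reduceCtorEq, if_false, mul_add, add_mul,
                Finset.sum_add_distrib]
              congr 1
              · exact shiftA (fun h => (PreF σ k h).card) (fun h => (SufF N σ (k+1) h).card) N hv1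
              · exact shiftB (fun h => (PreF σ k h).card) (fun h => (SufF N σ (k+1) h).card) N hv2
            · cases b
              · simp only [hσ, Option.some.injEq, Bool.false_eq_true, if_false, if_true,
                  zero_mul, mul_zero, zero_add, add_zero]
                exact shiftB (fun h => (PreF σ k h).card) (fun h => (SufF N σ (k+1) h).card) N hv2
              · simp only [hσ, Option.some.injEq, Bool.true_eq_false, if_false, if_true,
                  zero_mul, mul_zero, zero_add, add_zero]
                exact shiftA (fun h => (PreF σ k h).card) (fun h => (SufF N σ (k+1) h).card) N hv1
        _ = ∑ h ∈ Finset.range (N+2), (PreF σ (k+1) h).card * (SufF N σ (k+1) h).card := by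
            apply Finset.sum_congr rfl
            intro h _
            rw [PreF_peel σ k h]
    rw [key]

lemma LC_PreF (σ : ℕ → Option Bool) : ∀ k, LCseq (fun h => (PreF σ k h).card) := by
  intro k
  induction k with
  | zero =>
    have hfn : (fun h => (PreF σ 0 h).card) = fun h => if h = 0 then 1 else 0 :=
      funext fun h => PreF_zero σ h
    rw [hfn]
    exact LC_delta
  | succ k ih =>
    have hfn : (fun h => (PreF σ (k+1) h).card) = fun h =>
        (if σ (k+1) = some false then 0 else if h = 0 then 0 else (PreF σ k (h-1)).card) +
        (if σ (k+1) = some true then 0 else (PreF σ k (h+1)).card) :=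
      funext fun h => PreF_peel σ k h
    rw [hfn]
    rcases hσ : σ (k+1) with _ | b
    · simp only [hσ, reduceCtorEq, if_false]
      exact LC_free ih
    · cases b
      · simp only [hσ, Option.some.injEq, Bool.false_eq_true, Bool.true_eq_false, if_false,
          if_true, zero_add]
        exact LC_down ih
      · simp only [hσ, Option.some.injEq, Bool.false_eq_true, Bool.true_eq_false, if_false,
          if_true, add_zero]
        exact LC_up ih

lemma LC_SufF (N : ℕ) (σ : ℕ → Option Bool) :
    ∀ d k, k + d = N → LCseq (fun h => (SufF N σ k h).card) := by
  intro d
  induction d with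
  | zero =>
    intro k hk
    obtain rfl : N = k := by omega
    have hfn : (fun h => (SufF N σ N h).card) = fun h => if h = 0 then 1 else 0 :=
      funext fun h => SufF_last N σ h
    rw [hfn]
    exact LC_delta
  | succ d ih =>
    intro k hk
    have hkN : k < N := by omega
    have ih' := ih (k+1) (by omega)
    have hfn : (fun h => (SufF N σ k h).card) = fun h =>
        (if σ (k+1) = some false then 0 else (SufF N σ (k+1) (h+1)).card) +
        (if σ (k+1) = some true then 0 else if h = 0 then 0
          else (SufF N σ (k+1) (h-1)).card) :=
      funext fun h => SufF_peel N σ k h hkN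
    rw [hfn]
    rcases hσ : σ (k+1) with _ | b
    · simp only [hσ, reduceCtorEq, if_false]
      have hcomm : (fun h => (SufF N σ (k+1) (h+1)).card +
          (if h = 0 then 0 else (SufF N σ (k+1) (h-1)).card))
          = fun h => (if h = 0 then 0 else (SufF N σ (k+1) (h-1)).card) +
            (SufF N σ (k+1) (h+1)).card := funext fun h => add_comm _ _
      rw [hcomm]
      exact LC_free ih'
    · cases b
      · simp only [hσ, Option.some.injEq, Bool.false_eq_true, Bool.true_eq_false, if_false,
          if_true, zero_add]
        exact LC_up ih'
      · simp only [hσ, Option.some.injEq, Bool.false_eq_true, Bool.true_eq_false, if_false,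
          if_true, add_zero]
        exact LC_down ih'

lemma TP_SufF (N : ℕ) (σ1 σ2 : ℕ → Option Bool) (f : ℕ) (hfN : f ≤ N)
    (h1f : σ1 f = some true) (h2f : σ2 f = some false)
    (hagree : ∀ j, j ≠ f → σ1 j = σ2 j) :
    ∀ d k, k + d + 1 = f →
      TPpair (fun h => (SufF N σ1 k h).card) (fun h => (SufF N σ2 k h).card) := by
  intro d
  induction d with
  | zero =>
    intro k hk
    have hk1 : k + 1 = f := by omega
    have hkN : k < N := by omega
    have hZ : ∀ h, (SufF N σ2 f h).card = (SufF N σ1 f h).card := by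
      intro h
      rw [SufF_congr (N := N) f h (fun j hj => ?_)]
      rw [Finset.mem_Icc] at hj
      exact (hagree j (by omega)).symm
    have hfn1 : (fun h => (SufF N σ1 k h).card)
        = fun h => (SufF N σ1 f (h+1)).card := by
      funext h
      rw [SufF_peel N σ1 k h hkN, hk1, h1f]
      simp
    have hfn2 : (fun h => (SufF N σ2 k h).card)
        = fun h => if h = 0 then 0 else (SufF N σ1 f (h-1)).card := by
      funext h
      rw [SufF_peel N σ2 k h hkN, hk1, h2f]
      simp [hZ]
    rw [hfn1, hfn2]
    have hLC := LC_SufF N σ1 (N - f) f (by omega)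
    intro p q hpq hpar
    by_cases hp : p = 0
    · simp [hp]
    · have hq : ¬ q = 0 := by omega
      simp only [if_neg hp, if_neg hq]
      have := hLC (p-1) (q-1) (by omega) (by omega)
      rw [show p-1+2 = p+1 by omega, show q-1+2 = q+1 by omega] at this
      calc (SufF N σ1 f (q+1)).card * (SufF N σ1 f (p-1)).card
          = (SufF N σ1 f (p-1)).card * (SufF N σ1 f (q+1)).card := mul_comm _ _
        _ ≤ (SufF N σ1 f (p+1)).card * (SufF N σ1 f (q-1)).card := this
  | succ d ih =>
    intro k hk
    have hkN : k < N := by omega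
    have hkf : k + 1 ≠ f := by omega
    have ih' := ih (k+1) (by omega)
    have heq12 : σ2 (k+1) = σ1 (k+1) := (hagree (k+1) hkf).symm
    have hfn1 : (fun h => (SufF N σ1 k h).card) = fun h =>
        (if σ1 (k+1) = some false then 0 else (SufF N σ1 (k+1) (h+1)).card) +
        (if σ1 (k+1) = some true then 0 else if h = 0 then 0
          else (SufF N σ1 (k+1) (h-1)).card) :=
      funext fun h => SufF_peel N σ1 k h hkN
    have hfn2 : (fun h => (SufF N σ2 k h).card) = fun h =>
        (if σ1 (k+1) = some false then 0 else (SufF N σ2 (k+1) (h+1)).card) +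
        (if σ1 (k+1) = some true then 0 else if h = 0 then 0
          else (SufF N σ2 (k+1) (h-1)).card) := by
      funext h
      rw [SufF_peel N σ2 k h hkN, heq12]
    rw [hfn1, hfn2]
    rcases hσ : σ1 (k+1) with _ | b
    · simp only [hσ, reduceCtorEq, if_false]
      exact TP_free ih'
    · cases b
      · simp only [hσ, Option.some.injEq, Bool.false_eq_true, Bool.true_eq_false, if_false,
          if_true, zero_add]
        exact TP_down ih'
      · simp only [hσ, Option.some.injEq, Bool.false_eq_true, Bool.true_eq_false, if_false,
          if_true, add_zero]
        exact TP_up ih'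

noncomputable def sig0 (I J : Finset ℕ) : ℕ → Option Bool := fun j =>
  if j ∈ I then some true else if j ∈ J then some false else none

noncomputable def sigg (I J : Finset ℕ) (e f : ℕ) (be bf : Bool) : ℕ → Option Bool := fun j =>
  if j = e then some be else if j = f then some bf else sig0 I J j

lemma mem_dyck {n : ℕ} {S : Finset ℕ} : S ∈ dyck n ↔
    S ⊆ Finset.Icc 1 (2*n) ∧ S.card = n ∧
    ∀ k ∈ Finset.Icc 1 (2*n), k ≤ 2 * (S ∩ Finset.Icc 1 k).card := by
  simp [dyck, Finset.mem_filter, Finset.mem_powerset, and_assoc]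

lemma fam_eq (n : ℕ) (I J : Finset ℕ) (e f : ℕ)
    (hI : I ⊆ Finset.Icc 1 (2*n)) (hJ : J ⊆ Finset.Icc 1 (2*n)) (hIJ : Disjoint I J)
    (he : e ∈ Finset.Icc 1 (2*n) \ (I ∪ J)) (hf : f ∈ Finset.Icc 1 (2*n) \ (I ∪ J))
    (hef : e ≠ f) (be bf : Bool) :
    ((dyck n).filter (fun S => I ⊆ S ∧ Disjoint S J)).filter
        (fun S => (e ∈ S ↔ be = true) ∧ (f ∈ S ↔ bf = true))
      = PreF (sigg I J e f be bf) (2*n) 0 := by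
  have heIcc : e ∈ Finset.Icc 1 (2*n) := (Finset.mem_sdiff.1 he).1
  have heIJ : e ∉ I ∪ J := (Finset.mem_sdiff.1 he).2
  have heI : e ∉ I := fun hc => heIJ (Finset.mem_union_left _ hc)
  have heJ : e ∉ J := fun hc => heIJ (Finset.mem_union_right _ hc)
  have hfIcc : f ∈ Finset.Icc 1 (2*n) := (Finset.mem_sdiff.1 hf).1
  have hfIJ : f ∉ I ∪ J := (Finset.mem_sdiff.1 hf).2
  have hfI : f ∉ I := fun hc => hfIJ (Finset.mem_union_left _ hc)
  have hfJ : f ∉ J := fun hc => hfIJ (Finset.mem_union_right _ hc)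
  ext S
  simp only [Finset.mem_filter, mem_PreF]
  constructor
  · rintro ⟨⟨hdy, hIS, hSJ⟩, hbe, hbf⟩
    rw [mem_dyck] at hdy
    obtain ⟨hsub, hcard, hdyck⟩ := hdy
    refine ⟨hsub, by omega, hdyck, ?_⟩
    intro j hj
    constructor
    · intro hσ
      unfold sigg at hσ
      split_ifs at hσ with h1 h2
      · subst h1
        have : be = true := by simpa using hσ
        exact hbe.2 this
      · subst h2
        have : bf = true := by simpa using hσ
        exact hbf.2 this
      · unfold sig0 at hσ
        split_ifs at hσ with h3 h4
        · exact hIS h3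
        · simp at hσ
    · intro hσ hmem'
      unfold sigg at hσ
      split_ifs at hσ with h1 h2
      · subst h1
        have : be = false := by simpa using hσ
        rw [hbe.1 hmem'] at this
        simp at this
      · subst h2
        have : bf = false := by simpa using hσ
        rw [hbf.1 hmem'] at this
        simp at this
      · unfold sig0 at hσ
        split_ifs at hσ with h3 h4
        · simp at hσ
        · exact (Finset.disjoint_left.1 hSJ hmem') h4
  · rintro ⟨hsub, hcard, hdyck, hσm⟩
    have hIS : I ⊆ S := by
      intro i hi
      refine (hσm i (hI hi)).1 ?_
      have hie : i ≠ e := fun hc => heI (hc ▸ hi)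
      have hif : i ≠ f := fun hc => hfI (hc ▸ hi)
      simp [sigg, sig0, hie, hif, hi]
    have hSJ : Disjoint S J := by
      rw [Finset.disjoint_left]
      intro s hsS hsJ
      have hse : s ≠ e := fun hc => heJ (hc ▸ hsJ)
      have hsf : s ≠ f := fun hc => hfJ (hc ▸ hsJ)
      have hsI : s ∉ I := fun hc => (Finset.disjoint_left.1 hIJ hc) hsJ
      exact (hσm s (hJ hsJ)).2 (by simp [sigg, sig0, hse, hsf, hsI, hsJ]) hsS
    have hdyS : S ∈ dyck n := by
      rw [mem_dyck]
      exact ⟨hsub, by omega, hdyck⟩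
    have hσe : sigg I J e f be bf e = some be := by simp [sigg]
    have hσf : sigg I J e f be bf f = some bf := by simp [sigg, hef.symm]
    have h2e := hσm e heIcc
    have h2f := hσm f hfIcc
    refine ⟨⟨hdyS, hIS, hSJ⟩, ?_, ?_⟩
    · cases be
      · simp only [Bool.false_eq_true, iff_false]
        exact h2e.2 hσe
      · simp only [iff_true]
        exact h2e.1 hσe
    · cases bf
      · simp only [Bool.false_eq_true, iff_false]
        exact h2f.2 hσf
      · simp only [iff_true]
        exact h2f.1 hσf

lemma cb_identity (R : ℕ) (α β u v : ℕ → ℤ) :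
    ∑ h ∈ Finset.range R, ∑ k ∈ Finset.range R,
      (α h * β k - α k * β h) * (v h * u k - u h * v k)
    = 2 * ((∑ h ∈ Finset.range R, α h * v h) * (∑ h ∈ Finset.range R, β h * u h)
         - (∑ h ∈ Finset.range R, α h * u h) * (∑ h ∈ Finset.range R, β h * v h)) := by
  have e1 : ∀ (F G : ℕ → ℤ), (∑ h ∈ Finset.range R, F h) * (∑ k ∈ Finset.range R, G k)
      = ∑ h ∈ Finset.range R, ∑ k ∈ Finset.range R, F h * G k :=
    fun F G => Finset.sum_mul_sum _ _ _ _
  calc ∑ h ∈ Finset.range R, ∑ k ∈ Finset.range R,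
        (α h * β k - α k * β h) * (v h * u k - u h * v k)
      = ∑ h ∈ Finset.range R, ∑ k ∈ Finset.range R,
        ((α h * v h) * (β k * u k) - (α h * u h) * (β k * v k)
          - ((β h * v h) * (α k * u k) - (β h * u h) * (α k * v k))) := by
        apply Finset.sum_congr rfl
        intro h _
        apply Finset.sum_congr rfl
        intro k _
        ring
    _ = (∑ h ∈ Finset.range R, ∑ k ∈ Finset.range R, (α h * v h) * (β k * u k))
        - (∑ h ∈ Finset.range R, ∑ k ∈ Finset.range R, (α h * u h) * (β k * v k))
        - ((∑ h ∈ Finset.range R, ∑ k ∈ Finset.range R, (β h * v h) * (α k * u k))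
        - (∑ h ∈ Finset.range R, ∑ k ∈ Finset.range R, (β h * u h) * (α k * v k))) := by
        simp only [Finset.sum_sub_distrib]
    _ = 2 * ((∑ h ∈ Finset.range R, α h * v h) * (∑ h ∈ Finset.range R, β h * u h)
         - (∑ h ∈ Finset.range R, α h * u h) * (∑ h ∈ Finset.range R, β h * v h)) := by
        rw [← e1 (fun h => α h * v h) (fun k => β k * u k),
            ← e1 (fun h => α h * u h) (fun k => β k * v k),
            ← e1 (fun h => β h * v h) (fun k => α k * u k),
            ← e1 (fun h => β h * u h) (fun k => α k * v k)]
        ring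

lemma core_ineq (R : ℕ) (x u v : ℕ → ℕ) (par : ℕ)
    (hLC : LCseq x) (hTP : TPpair u v)
    (hxpar : ∀ m, x m ≠ 0 → (par + m) % 2 = 0) :
    (∑ h ∈ Finset.range R, (if h = 0 then (0:ℤ) else (x (h-1) : ℤ)) * (u h : ℤ)) *
      (∑ h ∈ Finset.range R, (x (h+1) : ℤ) * (v h : ℤ))
    ≤ (∑ h ∈ Finset.range R, (if h = 0 then (0:ℤ) else (x (h-1) : ℤ)) * (v h : ℤ)) *
      (∑ h ∈ Finset.range R, (x (h+1) : ℤ) * (u h : ℤ)) := by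
  set α : ℕ → ℤ := fun h => (if h = 0 then (0:ℤ) else (x (h-1) : ℤ)) with hα
  set β : ℕ → ℤ := fun h => ((x (h+1) : ℕ) : ℤ) with hβ
  set U : ℕ → ℤ := fun h => ((u h : ℕ) : ℤ) with hU
  set V : ℕ → ℤ := fun h => ((v h : ℕ) : ℤ) with hV
  show (∑ h ∈ Finset.range R, α h * U h) * (∑ h ∈ Finset.range R, β h * V h)
    ≤ (∑ h ∈ Finset.range R, α h * V h) * (∑ h ∈ Finset.range R, β h * U h)
  have hab : ∀ h k, h ≤ k → h % 2 = k % 2 → α h * β k ≤ α k * β h := by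
    intro h k hle hp
    by_cases h0 : h = 0
    · have hα0 : α h = 0 := by simp [hα, h0]
      rw [hα0, zero_mul]
      have hαk : 0 ≤ α k := by
        by_cases hk0 : k = 0 <;> simp [hα, hk0]
      have hβh : (0:ℤ) ≤ β h := by simp [hβ]
      exact mul_nonneg hαk hβh
    · have hk0 : ¬ k = 0 := by omega
      have h1 : α h = ((x (h-1) : ℕ) : ℤ) := by simp [hα, h0]
      have h2 : α k = ((x (k-1) : ℕ) : ℤ) := by simp [hα, hk0]
      rw [h1, h2]
      simp only [hβ]
      have hnat : x (h-1) * x (k+1) ≤ x (k-1) * x (h+1) := by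
        have := hLC (h-1) (k-1) (by omega) (by omega)
        rw [show h-1+2 = h+1 by omega, show k-1+2 = k+1 by omega] at this
        calc x (h-1) * x (k+1) ≤ x (h+1) * x (k-1) := this
          _ = x (k-1) * x (h+1) := mul_comm _ _
      exact_mod_cast hnat
  have huv : ∀ h k, h ≤ k → h % 2 = k % 2 → V h * U k ≤ U h * V k := by
    intro h k hle hp
    have hnat : v h * u k ≤ u h * v k := by
      calc v h * u k = u k * v h := mul_comm _ _
        _ ≤ u h * v k := hTP h k hle hp
    simp only [hU, hV]
    exact_mod_cast hnat
  have hz : ∀ h k, ¬ (h % 2 = k % 2) → α h * β k = 0 := by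
    intro h k hp
    by_cases hα0 : α h = 0
    · rw [hα0, zero_mul]
    · by_cases hβ0 : β k = 0
      · rw [hβ0, mul_zero]
      · exfalso
        have hh0 : ¬ h = 0 := by
          intro hc
          exact hα0 (by simp [hα, hc])
        have hx1 : x (h-1) ≠ 0 := by
          intro hc
          exact hα0 (by simp [hα, hh0, hc])
        have hx2 : x (k+1) ≠ 0 := by
          intro hc
          exact hβ0 (by simp [hβ, hc])
        have p1 := hxpar (h-1) hx1
        have p2 := hxpar (k+1) hx2
        omega
  have hnn : 0 ≤ ∑ h ∈ Finset.range R, ∑ k ∈ Finset.range R,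
      (α h * β k - α k * β h) * (V h * U k - U h * V k) := by
    apply Finset.sum_nonneg
    intro h _
    apply Finset.sum_nonneg
    intro k _
    by_cases hp : h % 2 = k % 2
    · rcases le_total h k with hle | hle
      · have f1 : α h * β k - α k * β h ≤ 0 := sub_nonpos.2 (hab h k hle hp)
        have f2 : V h * U k - U h * V k ≤ 0 := sub_nonpos.2 (huv h k hle hp)
        nlinarith [f1, f2]
      · have f1 : 0 ≤ α h * β k - α k * β h := sub_nonneg.2 (hab k h hle (by omega))
        have f2 : 0 ≤ V h * U k - U h * V k := by
          rw [sub_nonneg, show U h * V k = V k * U h from mul_comm _ _,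
            show V h * U k = U k * V h from mul_comm _ _]
          exact huv k h hle (by omega)
        exact mul_nonneg f1 f2
    · rw [hz h k hp, hz k h (by omega), sub_self, zero_mul]
  rw [cb_identity R α β U V] at hnn
  linarith

lemma main_lt (n : ℕ) (I J : Finset ℕ)
    (hI : I ⊆ Finset.Icc 1 (2 * n)) (hJ : J ⊆ Finset.Icc 1 (2 * n)) (hIJ : Disjoint I J)
    (e f : ℕ) (he : e ∈ Finset.Icc 1 (2 * n) \ (I ∪ J))
    (hf : f ∈ Finset.Icc 1 (2 * n) \ (I ∪ J)) (hef : e < f) :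
    (((dyck n).filter (fun S => I ⊆ S ∧ Disjoint S J)).filter (fun S => e ∈ S)).card *
      (((dyck n).filter (fun S => I ⊆ S ∧ Disjoint S J)).filter (fun S => f ∈ S)).card ≥
    ((dyck n).filter (fun S => I ⊆ S ∧ Disjoint S J)).card *
      (((dyck n).filter (fun S => I ⊆ S ∧ Disjoint S J)).filter
        (fun S => e ∈ S ∧ f ∈ S)).card := by
  have heIcc := (Finset.mem_sdiff.1 he).1
  have hfIcc := (Finset.mem_sdiff.1 hf).1
  rw [Finset.mem_Icc] at heIcc hfIcc
  set N := 2 * n with hN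
  set F := (dyck n).filter (fun S => I ⊆ S ∧ Disjoint S J) with hFdef
  set A := F.filter (fun S => e ∈ S ∧ f ∈ S) with hA
  set B := F.filter (fun S => e ∈ S ∧ f ∉ S) with hB
  set C := F.filter (fun S => e ∉ S ∧ f ∈ S) with hC
  set D := F.filter (fun S => e ∉ S ∧ f ∉ S) with hD
  -- card splittings
  have hsplitE : (F.filter (fun S => e ∈ S)).card = A.card + B.card := by
    have h1 := Finset.card_filter_add_card_filter_not
      (s := F.filter (fun S => e ∈ S)) (p := fun S => f ∈ S)
    have hA' : (F.filter (fun S => e ∈ S)).filter (fun S => f ∈ S) = A := by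
      rw [hA]; ext S; simp only [Finset.mem_filter]; tauto
    have hB' : (F.filter (fun S => e ∈ S)).filter (fun S => ¬ f ∈ S) = B := by
      rw [hB]; ext S; simp only [Finset.mem_filter]; tauto
    rw [hA', hB'] at h1
    exact h1.symm
  have hsplitF : (F.filter (fun S => f ∈ S)).card = A.card + C.card := by
    have h1 := Finset.card_filter_add_card_filter_not
      (s := F.filter (fun S => f ∈ S)) (p := fun S => e ∈ S)
    have hA' : (F.filter (fun S => f ∈ S)).filter (fun S => e ∈ S) = A := by
      rw [hA]; ext S; simp only [Finset.mem_filter]; tauto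
    have hC' : (F.filter (fun S => f ∈ S)).filter (fun S => ¬ e ∈ S) = C := by
      rw [hC]; ext S; simp only [Finset.mem_filter]; tauto
    rw [hA', hC'] at h1
    exact h1.symm
  have hsplitT : F.card = A.card + B.card + (C.card + D.card) := by
    have h1 := Finset.card_filter_add_card_filter_not (s := F) (p := fun S => e ∈ S)
    have h2 := Finset.card_filter_add_card_filter_not
      (s := F.filter (fun S => ¬ e ∈ S)) (p := fun S => f ∈ S)
    have hC' : (F.filter (fun S => ¬ e ∈ S)).filter (fun S => f ∈ S) = C := by
      rw [hC]; ext S; simp only [Finset.mem_filter]; tauto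
    have hD' : (F.filter (fun S => ¬ e ∈ S)).filter (fun S => ¬ f ∈ S) = D := by
      rw [hD]; ext S; simp only [Finset.mem_filter]; tauto
    rw [hC', hD'] at h2
    rw [← h1, ← h2, hsplitE]
  -- identification with PreF families
  have hfam := fam_eq n I J e f hI hJ hIJ he hf (Nat.ne_of_lt hef)
  have hAeq : A = PreF (sigg I J e f true true) N 0 := by
    rw [hA, hFdef, ← hfam true true]
    ext S
    simp only [Finset.mem_filter]
    simp
  have hBeq : B = PreF (sigg I J e f true false) N 0 := by
    rw [hB, hFdef, ← hfam true false]
    ext S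
    simp only [Finset.mem_filter]
    simp
  have hCeq : C = PreF (sigg I J e f false true) N 0 := by
    rw [hC, hFdef, ← hfam false true]
    ext S
    simp only [Finset.mem_filter]
    simp
  have hDeq : D = PreF (sigg I J e f false false) N 0 := by
    rw [hD, hFdef, ← hfam false false]
    ext S
    simp only [Finset.mem_filter]
    simp
  -- prefix evaluations
  have hel : e - 1 + 1 = e := by omega
  have hcg : ∀ (be bf : Bool) h', PreF (sigg I J e f be bf) (e-1) h' = PreF (sig0 I J) (e-1) h' := by
    intro be bf h'
    apply PreF_congr
    intro j hj
    rw [Finset.mem_Icc] at hj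
    have hje : j ≠ e := by omega
    have hjf : j ≠ f := by omega
    simp [sigg, hje, hjf]
  have hPreT : ∀ (bf : Bool) h, (PreF (sigg I J e f true bf) e h).card
      = (if h = 0 then 0 else (PreF (sig0 I J) (e-1) (h-1)).card) := by
    intro bf h
    have hp := PreF_peel (sigg I J e f true bf) (e-1) h
    rw [hel] at hp
    have hσe : sigg I J e f true bf e = some true := by simp [sigg]
    rw [hσe] at hp
    rw [hp]
    simp [hcg]
  have hPreFa : ∀ (bf : Bool) h, (PreF (sigg I J e f false bf) e h).card
      = (PreF (sig0 I J) (e-1) (h+1)).card := by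
    intro bf h
    have hp := PreF_peel (sigg I J e f false bf) (e-1) h
    rw [hel] at hp
    have hσe : sigg I J e f false bf e = some false := by simp [sigg]
    rw [hσe] at hp
    rw [hp]
    simp [hcg]
  -- suffix congruences
  have hSufT : ∀ (be : Bool) h, SufF N (sigg I J e f be true) e h
      = SufF N (sigg I J e f true true) e h := by
    intro be h
    apply SufF_congr
    intro j hj
    rw [Finset.mem_Icc] at hj
    have hje : j ≠ e := by omega
    simp [sigg, hje]
  have hSufFb : ∀ (be : Bool) h, SufF N (sigg I J e f be false) e h
      = SufF N (sigg I J e f true false) e h := by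
    intro be h
    apply SufF_congr
    intro j hj
    rw [Finset.mem_Icc] at hj
    have hje : j ≠ e := by omega
    simp [sigg, hje]
  -- counting formulas
  have heN : e ≤ N := by omega
  have haCount : A.card = ∑ h ∈ Finset.range (N+2),
      (if h = 0 then 0 else (PreF (sig0 I J) (e-1) (h-1)).card) *
        (SufF N (sigg I J e f true true) e h).card := by
    rw [hAeq, glue N (sigg I J e f true true) (N - e) e (by omega)]
    exact Finset.sum_congr rfl fun h _ => by rw [hPreT true h]
  have hbCount : B.card = ∑ h ∈ Finset.range (N+2),
      (if h = 0 then 0 else (PreF (sig0 I J) (e-1) (h-1)).card) *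
        (SufF N (sigg I J e f true false) e h).card := by
    rw [hBeq, glue N (sigg I J e f true false) (N - e) e (by omega)]
    exact Finset.sum_congr rfl fun h _ => by rw [hPreT false h]
  have hcCount : C.card = ∑ h ∈ Finset.range (N+2),
      (PreF (sig0 I J) (e-1) (h+1)).card *
        (SufF N (sigg I J e f true true) e h).card := by
    rw [hCeq, glue N (sigg I J e f false true) (N - e) e (by omega)]
    exact Finset.sum_congr rfl fun h _ => by rw [hPreFa true h, hSufT false h]
  have hdCount : D.card = ∑ h ∈ Finset.range (N+2),
      (PreF (sig0 I J) (e-1) (h+1)).card *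
        (SufF N (sigg I J e f true false) e h).card := by
    rw [hDeq, glue N (sigg I J e f false false) (N - e) e (by omega)]
    exact Finset.sum_congr rfl fun h _ => by rw [hPreFa false h, hSufFb false h]
  -- structural inequalities
  have hLC := LC_PreF (sig0 I J) (e-1)
  have hfe : f ≠ e := by omega
  have hTP := TP_SufF N (sigg I J e f true true) (sigg I J e f true false) f (by omega)
      (by simp [sigg, hfe]) (by simp [sigg, hfe])
      (fun j hj => by simp [sigg, hj]) (f - e - 1) e (by omega)
  have hxpar : ∀ m, (fun h => (PreF (sig0 I J) (e-1) h).card) m ≠ 0 → (e - 1 + m) % 2 = 0 := by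
    intro m hm
    obtain ⟨P, hP⟩ := Finset.card_pos.1 (Nat.pos_of_ne_zero hm)
    rw [mem_PreF] at hP
    omega
  have hkey := core_ineq (N+2) (fun h => (PreF (sig0 I J) (e-1) h).card)
      (fun h => (SufF N (sigg I J e f true true) e h).card)
      (fun h => (SufF N (sigg I J e f true false) e h).card)
      (e-1) hLC hTP hxpar
  -- cast the counting formulas
  have hcast : ∀ (G : ℕ → ℕ), ((∑ h ∈ Finset.range (N+2),
      (if h = 0 then 0 else (PreF (sig0 I J) (e-1) (h-1)).card) * G h : ℕ) : ℤ)
      = ∑ h ∈ Finset.range (N+2),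
        (if h = 0 then (0:ℤ) else ((PreF (sig0 I J) (e-1) (h-1)).card : ℤ)) * (G h : ℤ) := by
    intro G
    push_cast
    refine Finset.sum_congr rfl fun h _ => ?_
    by_cases h0 : h = 0 <;> simp [h0]
  have hcast2 : ∀ (G : ℕ → ℕ), ((∑ h ∈ Finset.range (N+2),
      (PreF (sig0 I J) (e-1) (h+1)).card * G h : ℕ) : ℤ)
      = ∑ h ∈ Finset.range (N+2),
        ((PreF (sig0 I J) (e-1) (h+1)).card : ℤ) * (G h : ℤ) := by
    intro G
    push_cast
    rfl
  have hbc : A.card * D.card ≤ B.card * C.card := by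
    rw [← Nat.cast_le (α := ℤ)]
    push_cast
    rw [haCount, hbCount, hcCount, hdCount]
    rw [← Nat.cast_mul, ← Nat.cast_mul, Nat.cast_mul, Nat.cast_mul]
    rw [hcast, hcast, hcast2, hcast2]
    exact hkey
  -- conclude
  rw [ge_iff_le, hsplitE, hsplitF, hsplitT]
  nlinarith [hbc]

end CatBal

/-- The Catalan matroid is balanced: every minor (contract `I`, delete `J`)
satisfies negative correlation. -/
theorem catalanMatroid_balanced
    (n : ℕ) (hn : 1 ≤ n)
    (I J : Finset ℕ) (hI : I ⊆ Finset.Icc 1 (2 * n)) (hJ : J ⊆ Finset.Icc 1 (2 * n))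
    (hIJ : Disjoint I J)
    (e f : ℕ) (he : e ∈ Finset.Icc 1 (2 * n) \ (I ∪ J))
    (hf : f ∈ Finset.Icc 1 (2 * n) \ (I ∪ J)) (hef : e ≠ f) :
    (((dyck n).filter (fun S => I ⊆ S ∧ Disjoint S J)).filter (fun S => e ∈ S)).card *
      (((dyck n).filter (fun S => I ⊆ S ∧ Disjoint S J)).filter (fun S => f ∈ S)).card ≥
    ((dyck n).filter (fun S => I ⊆ S ∧ Disjoint S J)).card *
      (((dyck n).filter (fun S => I ⊆ S ∧ Disjoint S J)).filter
        (fun S => e ∈ S ∧ f ∈ S)).card := by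
  rcases lt_or_gt_of_ne hef with h | h
  · exact CatBal.main_lt n I J hI hJ hIJ e f he hf h
  · have hmain := CatBal.main_lt n I J hI hJ hIJ f e hf he h
    have hswap : ((dyck n).filter (fun S => I ⊆ S ∧ Disjoint S J)).filter
          (fun S => f ∈ S ∧ e ∈ S)
        = ((dyck n).filter (fun S => I ⊆ S ∧ Disjoint S J)).filter
          (fun S => e ∈ S ∧ f ∈ S) := by
      ext S
      simp only [Finset.mem_filter]
      tauto
    rw [hswap] at hmain
    calc (((dyck n).filter (fun S => I ⊆ S ∧ Disjoint S J)).filter (fun S => e ∈ S)).card *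
          (((dyck n).filter (fun S => I ⊆ S ∧ Disjoint S J)).filter (fun S => f ∈ S)).card
        = (((dyck n).filter (fun S => I ⊆ S ∧ Disjoint S J)).filter (fun S => f ∈ S)).card *
          (((dyck n).filter (fun S => I ⊆ S ∧ Disjoint S J)).filter (fun S => e ∈ S)).card :=
          mul_comm _ _
      _ ≥ _ := hmain
end

section
/- For every n ≥ 1 and every k with 1 ≤ k ≤ n, the number of Dyck paths of length 2n having exactly k down-steps at even indices equals the Narayana number N(n,k); that is, |{S ∈ 𝓓(n) : the number of even indices in {1,…,2n} \ S equals k}| = (1/n)·binom(n,k)·binom(n,k−1). -/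
open scoped Classical

namespace NarayanaProof
open Finset

noncomputable def fP (n : ℕ) (S : Finset ℕ) : Finset ℕ := (Icc 1 n).filter (fun i => 2*i ∈ S)
noncomputable def fQ (n : ℕ) (S : Finset ℕ) : Finset ℕ := (Icc 1 n).filter (fun i => 2*i - 1 ∉ S)
noncomputable def gDec (n : ℕ) (PQ : Finset ℕ × Finset ℕ) : Finset ℕ :=
  (PQ.1.image (fun i => 2*i)) ∪ (((Icc 1 n).filter (fun i => i ∉ PQ.2)).image (fun i => 2*i - 1))

lemma card_nbij_old {α β : Type*} {s : Finset α} {t : Finset β} (i : α → β) (j : β → α)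
    (hi : ∀ a ∈ s, i a ∈ t) (hj : ∀ a ∈ t, j a ∈ s) (left_inv : ∀ a ∈ s, j (i a) = a)
    (right_inv : ∀ a ∈ t, i (j a) = a) : s.card = t.card :=
  card_nbij' i j hi hj left_inv right_inv

lemma filter_Icc_inter {n i : ℕ} (h : i ≤ n) (p : ℕ → Prop) [DecidablePred p] :
    (Icc 1 n).filter p ∩ Icc 1 i = (Icc 1 i).filter p := by
  ext x
  simp only [mem_inter, mem_filter, mem_Icc]
  constructor
  · rintro ⟨⟨⟨h1, _⟩, hp⟩, h3, h4⟩; exact ⟨⟨h3, h4⟩, hp⟩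
  · rintro ⟨⟨h1, h2⟩, hp⟩; exact ⟨⟨⟨h1, le_trans h2 h⟩, hp⟩, h1, h2⟩

lemma card_even_inter (S : Finset ℕ) (i : ℕ) :
    ((S.filter (fun x => Even x)) ∩ Icc 1 (2*i)).card
      = ((Icc 1 i).filter (fun j => 2*j ∈ S)).card := by
  apply card_nbij_old (i := fun x => x/2) (j := fun j => 2*j)
  · intro a ha
    simp only [mem_inter, mem_filter, mem_Icc, Nat.even_iff] at ha ⊢
    obtain ⟨⟨haS, he⟩, h1, h2⟩ := ha
    have h2a : 2 * (a / 2) = a := by omega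
    refine ⟨⟨by omega, by omega⟩, by rw [h2a]; exact haS⟩
  · intro j hj
    simp only [mem_inter, mem_filter, mem_Icc, Nat.even_iff] at hj ⊢
    obtain ⟨⟨h1, h2⟩, hjS⟩ := hj
    exact ⟨⟨hjS, by omega⟩, by omega, by omega⟩
  · intro a ha
    simp only [mem_inter, mem_filter, mem_Icc, Nat.even_iff] at ha
    omega
  · intro j hj; omega

lemma card_odd_inter (S : Finset ℕ) (i : ℕ) :
    ((S.filter (fun x => ¬ Even x)) ∩ Icc 1 (2*i)).card
      = ((Icc 1 i).filter (fun j => 2*j - 1 ∈ S)).card := by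
  apply card_nbij_old (i := fun x => (x+1)/2) (j := fun j => 2*j - 1)
  · intro a ha
    simp only [mem_inter, mem_filter, mem_Icc, Nat.even_iff] at ha ⊢
    obtain ⟨⟨haS, he⟩, h1, h2⟩ := ha
    have h2a : 2 * ((a+1) / 2) - 1 = a := by omega
    refine ⟨⟨by omega, by omega⟩, by rw [h2a]; exact haS⟩
  · intro j hj
    simp only [mem_inter, mem_filter, mem_Icc, Nat.even_iff] at hj ⊢
    obtain ⟨⟨h1, h2⟩, hjS⟩ := hj
    exact ⟨⟨hjS, by omega⟩, by omega, by omega⟩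
  · intro a ha
    simp only [mem_inter, mem_filter, mem_Icc, Nat.even_iff] at ha
    omega
  · intro j hj
    simp only [mem_filter, mem_Icc] at hj
    omega

lemma card_parity_split (S T : Finset ℕ) :
    (S ∩ T).card = ((S.filter (fun x => Even x)) ∩ T).card
      + ((S.filter (fun x => ¬ Even x)) ∩ T).card := by
  rw [filter_inter, filter_inter]
  exact (card_filter_add_card_filter_not (fun x => Even x)).symm

lemma odd_count (n i : ℕ) (S : Finset ℕ) (h : i ≤ n) :
    ((Icc 1 i).filter (fun j => 2*j - 1 ∈ S)).card + (fQ n S ∩ Icc 1 i).card = i := by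
  rw [fQ, filter_Icc_inter h]
  rw [card_filter_add_card_filter_not (s := Icc 1 i) (p := fun j => 2*j-1 ∈ S)]
  simp [Nat.card_Icc]

lemma M2 (n i : ℕ) (S : Finset ℕ) (h : i ≤ n) :
    (S ∩ Icc 1 (2*i)).card + (fQ n S ∩ Icc 1 i).card = (fP n S ∩ Icc 1 i).card + i := by
  rw [card_parity_split, card_even_inter, card_odd_inter]
  rw [fP, filter_Icc_inter h]
  have := odd_count n i S h
  omega

lemma M1 (n i : ℕ) (S : Finset ℕ) (h1 : 1 ≤ i) (h : i ≤ n) :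
    (S ∩ Icc 1 (2*i - 1)).card + (fQ n S ∩ Icc 1 i).card
      = (fP n S ∩ Icc 1 (i-1)).card + i := by
  rw [card_parity_split]
  have he : (S.filter (fun x => Even x)) ∩ Icc 1 (2*i - 1)
      = (S.filter (fun x => Even x)) ∩ Icc 1 (2*(i-1)) := by
    ext x
    simp only [mem_inter, mem_filter, mem_Icc, Nat.even_iff]
    constructor
    · rintro ⟨⟨hS, hx⟩, ha, hb⟩; exact ⟨⟨hS, hx⟩, ha, by omega⟩
    · rintro ⟨⟨hS, hx⟩, ha, hb⟩; exact ⟨⟨hS, hx⟩, ha, by omega⟩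
  have ho : (S.filter (fun x => ¬ Even x)) ∩ Icc 1 (2*i - 1)
      = (S.filter (fun x => ¬ Even x)) ∩ Icc 1 (2*i) := by
    ext x
    simp only [mem_inter, mem_filter, mem_Icc, Nat.even_iff]
    constructor
    · rintro ⟨⟨hS, hx⟩, ha, hb⟩; exact ⟨⟨hS, hx⟩, ha, by omega⟩
    · rintro ⟨⟨hS, hx⟩, ha, hb⟩; exact ⟨⟨hS, hx⟩, ha, by omega⟩
  rw [he, ho, card_even_inter, card_odd_inter]
  rw [fP, filter_Icc_inter (by omega : i - 1 ≤ n)]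
  have := odd_count n i S h
  omega

lemma gDec_subset (n : ℕ) (PQ : Finset ℕ × Finset ℕ) (hP : PQ.1 ⊆ Icc 1 n) :
    gDec n PQ ⊆ Icc 1 (2*n) := by
  intro x hx
  simp only [gDec, mem_union, mem_image, mem_filter, mem_Icc] at hx
  rcases hx with ⟨a, ha, rfl⟩ | ⟨a, ⟨⟨h1, h2⟩, _⟩, rfl⟩
  · have := hP ha; simp only [mem_Icc] at this ⊢; omega
  · simp only [mem_Icc]; omega

lemma gP (n : ℕ) (PQ : Finset ℕ × Finset ℕ) (hP : PQ.1 ⊆ Icc 1 n) :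
    fP n (gDec n PQ) = PQ.1 := by
  ext i
  simp only [fP, gDec, mem_filter, mem_Icc, mem_union, mem_image]
  constructor
  · rintro ⟨⟨h1, h2⟩, ⟨a, ha, haeq⟩ | ⟨a, ⟨⟨ha1, _⟩, _⟩, haeq⟩⟩
    · have : a = i := by omega
      exact this ▸ ha
    · exact absurd haeq (by omega)
  · intro hi
    have := hP hi; simp only [mem_Icc] at this
    exact ⟨this, Or.inl ⟨i, hi, rfl⟩⟩

lemma gQ (n : ℕ) (PQ : Finset ℕ × Finset ℕ) (hP : PQ.1 ⊆ Icc 1 n)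
    (hQ : PQ.2 ⊆ Icc 1 n) : fQ n (gDec n PQ) = PQ.2 := by
  ext i
  simp only [fQ, gDec, mem_filter, mem_Icc, mem_union, mem_image, mem_filter]
  constructor
  · rintro ⟨⟨h1, h2⟩, hni⟩
    by_contra hiQ
    exact hni (Or.inr ⟨i, ⟨⟨h1, h2⟩, hiQ⟩, rfl⟩)
  · intro hi
    have hIcc := hQ hi; simp only [mem_Icc] at hIcc
    refine ⟨hIcc, ?_⟩
    rintro (⟨a, ha, haeq⟩ | ⟨a, ⟨⟨ha1, _⟩, haQ⟩, haeq⟩)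
    · have := hP ha; simp only [mem_Icc] at this; omega
    · have : a = i := by omega
      exact haQ (this ▸ hi)

lemma gf (n : ℕ) (S : Finset ℕ) (hS : S ⊆ Icc 1 (2*n)) :
    gDec n (fP n S, fQ n S) = S := by
  ext x
  simp only [gDec, fP, fQ, mem_union, mem_image, mem_filter, mem_Icc, not_and, not_not]
  constructor
  · rintro (⟨a, ⟨⟨h1, h2⟩, haS⟩, rfl⟩ | ⟨a, ⟨⟨h1, h2⟩, haS⟩, rfl⟩)
    · exact haS
    · exact haS ⟨h1, h2⟩
  · intro hx
    have hIcc := hS hx; simp only [mem_Icc] at hIcc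
    rcases Nat.even_or_odd x with he | ho
    · left
      obtain ⟨c, hc⟩ := he
      have h2 : 2 * (x/2) = x := by omega
      refine ⟨x/2, ⟨⟨by omega, by omega⟩, by rw [h2]; exact hx⟩, by omega⟩
    · right
      have hxo : x % 2 = 1 := Nat.odd_iff.mp ho
      refine ⟨(x+1)/2, ⟨⟨by omega, by omega⟩, fun _ => ?_⟩, by omega⟩
      have : 2 * ((x+1)/2) - 1 = x := by omega
      rw [this]; exact hx

lemma M3 (n : ℕ) (S : Finset ℕ) (hS : S ⊆ Icc 1 (2*n)) :
    S.card + (fQ n S).card = (fP n S).card + n := by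
  have h := M2 n n S le_rfl
  have hq : fQ n S ∩ Icc 1 n = fQ n S := inter_eq_left.mpr (filter_subset _ _)
  have hp : fP n S ∩ Icc 1 n = fP n S := inter_eq_left.mpr (filter_subset _ _)
  rw [inter_eq_left.mpr hS, hq, hp] at h
  exact h

lemma M4 (n : ℕ) (S : Finset ℕ) (hS : S ⊆ Icc 1 (2*n)) :
    ((Icc 1 (2*n) \ S).filter (fun i => Even i)).card + (fP n S).card = n := by
  have htot : (((Icc 1 (2*n)).filter (fun x => Even x))).card = n := by
    have h := card_even_inter (Icc 1 (2*n)) n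
    rw [inter_eq_left.mpr (filter_subset _ _)] at h
    rw [h]
    rw [filter_true_of_mem (fun j hj => by simp only [mem_Icc] at hj ⊢; omega)]
    simp [Nat.card_Icc]
  have h1 : (Icc 1 (2*n) \ S).filter (fun i => Even i)
      = ((Icc 1 (2*n)).filter (fun x => Even x)).filter (fun x => ¬ (x ∈ S)) := by
    ext x
    simp only [mem_filter, mem_sdiff]
    tauto
  have h2 : S.filter (fun x => Even x)
      = ((Icc 1 (2*n)).filter (fun x => Even x)).filter (fun x => x ∈ S) := by
    ext x
    simp only [mem_filter]
    exact ⟨fun ⟨hx, he⟩ => ⟨⟨hS hx, he⟩, hx⟩, fun ⟨⟨_, he⟩, hx⟩ => ⟨hx, he⟩⟩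
  have h3 := card_filter_add_card_filter_not
    (s := (Icc 1 (2*n)).filter (fun x => Even x)) (p := fun x => x ∈ S)
  have h4 : (S.filter (fun x => Even x)).card = (fP n S).card := by
    have h := card_even_inter S n
    rw [inter_eq_left.mpr (fun x hx => by
      have := hS (mem_filter.mp hx).1; exact this)] at h
    exact h
  rw [h2] at h4
  rw [h1]
  omega

lemma dyck_iff (n : ℕ) (S : Finset ℕ) :
    (∀ j ∈ Icc 1 (2*n), j ≤ 2 * (S ∩ Icc 1 j).card) ↔
    (∀ i ∈ Icc 1 n, (fQ n S ∩ Icc 1 i).card ≤ (fP n S ∩ Icc 1 (i-1)).card) := by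
  constructor
  · intro h i hi
    simp only [mem_Icc] at hi
    have hj := h (2*i - 1) (by simp only [mem_Icc]; omega)
    have hm := M1 n i S hi.1 hi.2
    omega
  · intro h j hj
    simp only [mem_Icc] at hj
    rcases Nat.even_or_odd j with he | ho
    · obtain ⟨c, hc⟩ := he
      have hji : j = 2 * (j/2) := by omega
      have hi : 1 ≤ j/2 ∧ j/2 ≤ n := by omega
      have hd := h (j/2) (by simp only [mem_Icc]; exact hi)
      have hm := M2 n (j/2) S hi.2
      have hmono : (fP n S ∩ Icc 1 (j/2 - 1)).card ≤ (fP n S ∩ Icc 1 (j/2)).card :=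
        card_le_card (by
          apply inter_subset_inter_left
          apply Icc_subset_Icc_right
          omega)
      rw [hji]
      omega
    · have hxo : j % 2 = 1 := Nat.odd_iff.mp ho
      have hji : j = 2 * ((j+1)/2) - 1 := by omega
      have hi : 1 ≤ (j+1)/2 ∧ (j+1)/2 ≤ n := by omega
      have hd := h ((j+1)/2) (by simp only [mem_Icc]; exact hi)
      have hm := M1 n ((j+1)/2) S hi.1 hi.2
      rw [hji]
      omega

noncomputable def pairsN (n a b : ℕ) : Finset (Finset ℕ × Finset ℕ) :=
  ((Finset.Icc 1 n).powerset ×ˢ (Finset.Icc 1 n).powerset).filter fun PQ =>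
    PQ.1.card = a ∧ PQ.2.card = b ∧
      ∀ i ∈ Finset.Icc 1 n, (PQ.2 ∩ Finset.Icc 1 i).card ≤ (PQ.1 ∩ Finset.Icc 1 (i-1)).card

lemma mem_pairsN {n a b : ℕ} {PQ : Finset ℕ × Finset ℕ} :
    PQ ∈ pairsN n a b ↔ PQ.1 ⊆ Icc 1 n ∧ PQ.2 ⊆ Icc 1 n ∧ PQ.1.card = a ∧ PQ.2.card = b ∧
      ∀ i ∈ Icc 1 n, (PQ.2 ∩ Icc 1 i).card ≤ (PQ.1 ∩ Icc 1 (i-1)).card := by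
  simp only [pairsN, mem_filter, mem_product, mem_powerset]
  tauto

lemma cardA (n k : ℕ) (hk : k ≤ n) :
    ((dyck n).filter (fun S =>
        (((Finset.Icc 1 (2 * n)) \ S).filter (fun i => Even i)).card = k)).card
      = (pairsN n (n-k) (n-k)).card := by
  apply card_nbij_old (i := fun S => (fP n S, fQ n S)) (j := fun PQ => gDec n PQ)
  · intro S hS
    simp only [mem_filter, dyck, mem_powerset] at hS
    obtain ⟨⟨hsub, hcard, hcond⟩, hstat⟩ := hS
    have h4 := M4 n S hsub
    have h3 := M3 n S hsub
    rw [mem_pairsN]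
    dsimp only
    refine ⟨filter_subset _ _, filter_subset _ _, by omega, by omega, ?_⟩
    exact (dyck_iff n S).mp hcond
  · intro PQ hPQ
    rw [mem_pairsN] at hPQ
    obtain ⟨hP, hQ, hcP, hcQ, hdom⟩ := hPQ
    have hsub := gDec_subset n PQ hP
    have hgP := gP n PQ hP
    have hgQ := gQ n PQ hP hQ
    have h3 := M3 n (gDec n PQ) hsub
    have h4 := M4 n (gDec n PQ) hsub
    rw [hgP, hgQ] at h3
    rw [hgP] at h4
    simp only [mem_filter, dyck, mem_powerset]
    refine ⟨⟨hsub, by omega, ?_⟩, by omega⟩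
    apply (dyck_iff n (gDec n PQ)).mpr
    rw [hgP, hgQ]
    exact hdom
  · intro S hS
    simp only [mem_filter, dyck, mem_powerset] at hS
    exact gf n S hS.1.1
  · intro PQ hPQ
    rw [mem_pairsN] at hPQ
    exact Prod.ext (gP n PQ hPQ.1) (gQ n PQ hPQ.1 hPQ.2.1)
lemma erase_inter_Icc (Q : Finset ℕ) {i n : ℕ} (h : i ≤ n) :
    (Q.erase (n+1)) ∩ Icc 1 i = Q ∩ Icc 1 i := by
  ext x
  simp only [mem_inter, mem_erase, mem_Icc]
  constructor
  · rintro ⟨⟨_, hx⟩, h1, h2⟩; exact ⟨hx, h1, h2⟩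
  · rintro ⟨hx, h1, h2⟩; exact ⟨⟨by omega, hx⟩, h1, h2⟩

lemma insert_inter_Icc (Q : Finset ℕ) {i n : ℕ} (h : i ≤ n) :
    (insert (n+1) Q) ∩ Icc 1 i = Q ∩ Icc 1 i := by
  ext x
  simp only [mem_inter, mem_insert, mem_Icc]
  constructor
  · rintro ⟨rfl | hx, h1, h2⟩
    · omega
    · exact ⟨hx, h1, h2⟩
  · rintro ⟨hx, h1, h2⟩; exact ⟨Or.inr hx, h1, h2⟩

lemma subset_smaller {n : ℕ} {P : Finset ℕ} (hP : P ⊆ Icc 1 (n+1)) (hn : (n+1) ∉ P) :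
    P ⊆ Icc 1 n := by
  intro x hx
  have := hP hx
  simp only [mem_Icc] at this ⊢
  refine ⟨this.1, ?_⟩
  rcases Nat.lt_or_ge x (n+1) with h | h
  · omega
  · exfalso
    have hxe : x = n+1 := by omega
    subst hxe
    exact hn hx

lemma dom_top {n a b : ℕ} {PQ : Finset ℕ × Finset ℕ} (h : PQ ∈ pairsN (n+1) a b)
    (hm : n+1 ∈ PQ.1) : b + 1 ≤ a := by
  rw [mem_pairsN] at h
  obtain ⟨hP, hQ, hca, hcb, hdom⟩ := h
  have hd := hdom (n+1) (by simp only [mem_Icc]; omega)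
  have hQq : PQ.2 ∩ Icc 1 (n+1) = PQ.2 := inter_eq_left.mpr hQ
  have hPe : PQ.1 ∩ Icc 1 ((n+1)-1) = PQ.1.erase (n+1) := by
    ext x
    simp only [mem_inter, mem_erase, mem_Icc, Nat.add_sub_cancel]
    constructor
    · rintro ⟨hxP, h1, h2⟩; exact ⟨by omega, hxP⟩
    · rintro ⟨hne, hxP⟩
      have := hP hxP; simp only [mem_Icc] at this
      exact ⟨hxP, this.1, by omega⟩
  rw [hQq, hPe, card_erase_of_mem hm, hca, hcb] at hd
  have ha : 1 ≤ a := by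
    rw [← hca]
    exact card_pos.mpr ⟨n+1, hm⟩
  omega

lemma P00 {n a b : ℕ} (hba : b ≤ a) :
    (pairsN (n+1) a b).filter (fun PQ => (n+1) ∉ PQ.1 ∧ (n+1) ∉ PQ.2) = pairsN n a b := by
  ext PQ
  simp only [mem_filter, mem_pairsN]
  constructor
  · rintro ⟨⟨hP, hQ, hca, hcb, hdom⟩, hnP, hnQ⟩
    refine ⟨subset_smaller hP hnP, subset_smaller hQ hnQ, hca, hcb, fun i hi => ?_⟩
    exact hdom i (by simp only [mem_Icc] at hi ⊢; omega)
  · rintro ⟨hP, hQ, hca, hcb, hdom⟩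
    have hnP : (n+1) ∉ PQ.1 := fun hx => by have := hP hx; simp only [mem_Icc] at this; omega
    have hnQ : (n+1) ∉ PQ.2 := fun hx => by have := hQ hx; simp only [mem_Icc] at this; omega
    refine ⟨⟨hP.trans (Icc_subset_Icc_right (by omega)),
            hQ.trans (Icc_subset_Icc_right (by omega)), hca, hcb, fun i hi => ?_⟩, hnP, hnQ⟩
    simp only [mem_Icc] at hi
    rcases Nat.lt_or_ge i (n+1) with h | h
    · exact hdom i (by simp only [mem_Icc]; omega)
    · have hieq : i = n+1 := by omega
      subst hieq
      have h1 : PQ.2 ∩ Icc 1 (n+1) = PQ.2 :=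
        inter_eq_left.mpr (hQ.trans (Icc_subset_Icc_right (by omega)))
      have h2 : PQ.1 ∩ Icc 1 ((n+1)-1) = PQ.1 := by
        simp only [Nat.add_sub_cancel]
        exact inter_eq_left.mpr hP
      rw [h1, h2, hca, hcb]
      exact hba
lemma P01 {n a b : ℕ} (hb : 1 ≤ b) (hba : b ≤ a) :
    ((pairsN (n+1) a b).filter (fun PQ => (n+1) ∉ PQ.1 ∧ (n+1) ∈ PQ.2)).card
      = (pairsN n a (b-1)).card := by
  apply card_nbij_old (i := fun PQ => (PQ.1, PQ.2.erase (n+1)))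
    (j := fun PQ => (PQ.1, insert (n+1) PQ.2))
  · intro PQ hPQ
    simp only [mem_filter, mem_pairsN] at hPQ
    obtain ⟨⟨hP, hQ, hca, hcb, hdom⟩, hnP, hnQ⟩ := hPQ
    rw [mem_pairsN]
    refine ⟨subset_smaller hP hnP, ?_, hca, ?_, fun i hi => ?_⟩
    · intro x hx
      have hxQ := mem_of_mem_erase hx
      have hne := ne_of_mem_erase hx
      have := hQ hxQ; simp only [mem_Icc] at this ⊢; omega
    · rw [card_erase_of_mem hnQ, hcb]
    · simp only [mem_Icc] at hi
      rw [erase_inter_Icc _ hi.2]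
      exact hdom i (by simp only [mem_Icc]; omega)
  · intro PQ hPQ
    rw [mem_pairsN] at hPQ
    obtain ⟨hP, hQ, hca, hcb, hdom⟩ := hPQ
    have hnQ : (n+1) ∉ PQ.2 := fun hx => by have := hQ hx; simp only [mem_Icc] at this; omega
    simp only [mem_filter, mem_pairsN]
    refine ⟨⟨hP.trans (Icc_subset_Icc_right (by omega)), ?_, hca, ?_, fun i hi => ?_⟩,
      fun hx => by have := hP hx; simp only [mem_Icc] at this; omega, mem_insert_self _ _⟩
    · exact insert_subset (by simp only [mem_Icc]; omega)
        (hQ.trans (Icc_subset_Icc_right (by omega)))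
    · rw [card_insert_of_notMem hnQ, hcb]; omega
    · simp only [mem_Icc] at hi
      rcases Nat.lt_or_ge i (n+1) with h | h
      · rw [insert_inter_Icc _ (by omega : i ≤ n)]
        exact hdom i (by simp only [mem_Icc]; omega)
      · have hieq : i = n+1 := by omega
        subst hieq
        have h1 : (insert (n+1) PQ.2) ∩ Icc 1 (n+1) = insert (n+1) PQ.2 :=
          inter_eq_left.mpr (insert_subset (by simp only [mem_Icc]; omega)
            (hQ.trans (Icc_subset_Icc_right (by omega))))
        have h2 : PQ.1 ∩ Icc 1 ((n+1)-1) = PQ.1 := by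
          simp only [Nat.add_sub_cancel]; exact inter_eq_left.mpr hP
        rw [h1, h2, card_insert_of_notMem hnQ, hca, hcb]
        omega
  · intro PQ hPQ
    simp only [mem_filter] at hPQ
    exact Prod.ext rfl (insert_erase hPQ.2.2)
  · intro PQ hPQ
    rw [mem_pairsN] at hPQ
    have hnQ : (n+1) ∉ PQ.2 := fun hx => by
      have := hPQ.2.1 hx; simp only [mem_Icc] at this; omega
    exact Prod.ext rfl (erase_insert hnQ)

lemma P10 {n a b : ℕ} (hba : b + 1 ≤ a) :
    ((pairsN (n+1) a b).filter (fun PQ => (n+1) ∈ PQ.1 ∧ (n+1) ∉ PQ.2)).card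
      = (pairsN n (a-1) b).card := by
  apply card_nbij_old (i := fun PQ => (PQ.1.erase (n+1), PQ.2))
    (j := fun PQ => (insert (n+1) PQ.1, PQ.2))
  · intro PQ hPQ
    simp only [mem_filter, mem_pairsN] at hPQ
    obtain ⟨⟨hP, hQ, hca, hcb, hdom⟩, hnP, hnQ⟩ := hPQ
    rw [mem_pairsN]
    refine ⟨?_, subset_smaller hQ hnQ, ?_, hcb, fun i hi => ?_⟩
    · intro x hx
      have hxP := mem_of_mem_erase hx
      have hne := ne_of_mem_erase hx
      have := hP hxP; simp only [mem_Icc] at this ⊢; omega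
    · rw [card_erase_of_mem hnP, hca]
    · simp only [mem_Icc] at hi
      rw [erase_inter_Icc _ (by omega : i - 1 ≤ n)]
      exact hdom i (by simp only [mem_Icc]; omega)
  · intro PQ hPQ
    rw [mem_pairsN] at hPQ
    obtain ⟨hP, hQ, hca, hcb, hdom⟩ := hPQ
    have hnP : (n+1) ∉ PQ.1 := fun hx => by have := hP hx; simp only [mem_Icc] at this; omega
    have hnQ : (n+1) ∉ PQ.2 := fun hx => by have := hQ hx; simp only [mem_Icc] at this; omega
    simp only [mem_filter, mem_pairsN]
    refine ⟨⟨?_, hQ.trans (Icc_subset_Icc_right (by omega)), ?_, hcb, fun i hi => ?_⟩,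
      mem_insert_self _ _, hnQ⟩
    · exact insert_subset (by simp only [mem_Icc]; omega)
        (hP.trans (Icc_subset_Icc_right (by omega)))
    · rw [card_insert_of_notMem hnP, hca]; omega
    · simp only [mem_Icc] at hi
      rcases Nat.lt_or_ge i (n+1) with h | h
      · rw [insert_inter_Icc _ (by omega : i - 1 ≤ n)]
        exact hdom i (by simp only [mem_Icc]; omega)
      · have hieq : i = n+1 := by omega
        subst hieq
        have h1 : PQ.2 ∩ Icc 1 (n+1) = PQ.2 :=
          inter_eq_left.mpr (hQ.trans (Icc_subset_Icc_right (by omega)))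
        have h2 : (insert (n+1) PQ.1) ∩ Icc 1 ((n+1)-1) = PQ.1 := by
          simp only [Nat.add_sub_cancel]
          rw [insert_inter_Icc _ (le_refl n)]
          exact inter_eq_left.mpr hP
        rw [h1, h2, hca, hcb]
        omega
  · intro PQ hPQ
    simp only [mem_filter] at hPQ
    exact Prod.ext (insert_erase hPQ.2.1) rfl
  · intro PQ hPQ
    rw [mem_pairsN] at hPQ
    have hnP : (n+1) ∉ PQ.1 := fun hx => by
      have := hPQ.1 hx; simp only [mem_Icc] at this; omega
    exact Prod.ext (erase_insert hnP) rfl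

lemma P11 {n a b : ℕ} (hb : 1 ≤ b) (hba : b + 1 ≤ a) :
    ((pairsN (n+1) a b).filter (fun PQ => (n+1) ∈ PQ.1 ∧ (n+1) ∈ PQ.2)).card
      = (pairsN n (a-1) (b-1)).card := by
  apply card_nbij_old (i := fun PQ => (PQ.1.erase (n+1), PQ.2.erase (n+1)))
    (j := fun PQ => (insert (n+1) PQ.1, insert (n+1) PQ.2))
  · intro PQ hPQ
    simp only [mem_filter, mem_pairsN] at hPQ
    obtain ⟨⟨hP, hQ, hca, hcb, hdom⟩, hnP, hnQ⟩ := hPQ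
    rw [mem_pairsN]
    refine ⟨?_, ?_, ?_, ?_, fun i hi => ?_⟩
    · intro x hx
      have hxP := mem_of_mem_erase hx
      have hne := ne_of_mem_erase hx
      have := hP hxP; simp only [mem_Icc] at this ⊢; omega
    · intro x hx
      have hxQ := mem_of_mem_erase hx
      have hne := ne_of_mem_erase hx
      have := hQ hxQ; simp only [mem_Icc] at this ⊢; omega
    · rw [card_erase_of_mem hnP, hca]
    · rw [card_erase_of_mem hnQ, hcb]
    · simp only [mem_Icc] at hi
      rw [erase_inter_Icc _ hi.2, erase_inter_Icc _ (by omega : i - 1 ≤ n)]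
      exact hdom i (by simp only [mem_Icc]; omega)
  · intro PQ hPQ
    rw [mem_pairsN] at hPQ
    obtain ⟨hP, hQ, hca, hcb, hdom⟩ := hPQ
    have hnP : (n+1) ∉ PQ.1 := fun hx => by have := hP hx; simp only [mem_Icc] at this; omega
    have hnQ : (n+1) ∉ PQ.2 := fun hx => by have := hQ hx; simp only [mem_Icc] at this; omega
    simp only [mem_filter, mem_pairsN]
    refine ⟨⟨?_, ?_, ?_, ?_, fun i hi => ?_⟩, mem_insert_self _ _, mem_insert_self _ _⟩
    · exact insert_subset (by simp only [mem_Icc]; omega)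
        (hP.trans (Icc_subset_Icc_right (by omega)))
    · exact insert_subset (by simp only [mem_Icc]; omega)
        (hQ.trans (Icc_subset_Icc_right (by omega)))
    · rw [card_insert_of_notMem hnP, hca]; omega
    · rw [card_insert_of_notMem hnQ, hcb]; omega
    · simp only [mem_Icc] at hi
      rcases Nat.lt_or_ge i (n+1) with h | h
      · rw [insert_inter_Icc _ (by omega : i ≤ n), insert_inter_Icc _ (by omega : i - 1 ≤ n)]
        exact hdom i (by simp only [mem_Icc]; omega)
      · have hieq : i = n+1 := by omega
        subst hieq
        have h1 : (insert (n+1) PQ.2) ∩ Icc 1 (n+1) = insert (n+1) PQ.2 :=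
          inter_eq_left.mpr (insert_subset (by simp only [mem_Icc]; omega)
            (hQ.trans (Icc_subset_Icc_right (by omega))))
        have h2 : (insert (n+1) PQ.1) ∩ Icc 1 ((n+1)-1) = PQ.1 := by
          simp only [Nat.add_sub_cancel]
          rw [insert_inter_Icc _ (le_refl n)]
          exact inter_eq_left.mpr hP
        rw [h1, h2, card_insert_of_notMem hnQ, hca, hcb]
        omega
  · intro PQ hPQ
    simp only [mem_filter] at hPQ
    exact Prod.ext (insert_erase hPQ.2.1) (insert_erase hPQ.2.2)
  · intro PQ hPQ
    rw [mem_pairsN] at hPQ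
    have hnP : (n+1) ∉ PQ.1 := fun hx => by
      have := hPQ.1 hx; simp only [mem_Icc] at this; omega
    have hnQ : (n+1) ∉ PQ.2 := fun hx => by
      have := hPQ.2.1 hx; simp only [mem_Icc] at this; omega
    exact Prod.ext (erase_insert hnP) (erase_insert hnQ)
lemma Ptop_empty1 {n a b : ℕ} (hba : a ≤ b) :
    (pairsN (n+1) a b).filter (fun PQ => (n+1) ∈ PQ.1 ∧ (n+1) ∈ PQ.2) = ∅ := by
  rw [eq_empty_iff_forall_notMem]
  intro PQ h
  rw [mem_filter] at h
  have := dom_top h.1 h.2.1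
  omega

lemma Ptop_empty2 {n a b : ℕ} (hba : a ≤ b) :
    (pairsN (n+1) a b).filter (fun PQ => (n+1) ∈ PQ.1 ∧ (n+1) ∉ PQ.2) = ∅ := by
  rw [eq_empty_iff_forall_notMem]
  intro PQ h
  rw [mem_filter] at h
  have := dom_top h.1 h.2.1
  omega

lemma card_split4 (n a b : ℕ) :
    (pairsN (n+1) a b).card
      = ((pairsN (n+1) a b).filter (fun PQ => (n+1) ∈ PQ.1 ∧ (n+1) ∈ PQ.2)).card
      + ((pairsN (n+1) a b).filter (fun PQ => (n+1) ∈ PQ.1 ∧ (n+1) ∉ PQ.2)).card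
      + ((pairsN (n+1) a b).filter (fun PQ => (n+1) ∉ PQ.1 ∧ (n+1) ∈ PQ.2)).card
      + ((pairsN (n+1) a b).filter (fun PQ => (n+1) ∉ PQ.1 ∧ (n+1) ∉ PQ.2)).card := by
  have h1 := card_filter_add_card_filter_not (s := pairsN (n+1) a b)
    (p := fun PQ => (n+1) ∈ PQ.1)
  have h2 := card_filter_add_card_filter_not
    (s := (pairsN (n+1) a b).filter (fun PQ => (n+1) ∈ PQ.1))
    (p := fun PQ => (n+1) ∈ PQ.2)
  have h3 := card_filter_add_card_filter_not
    (s := (pairsN (n+1) a b).filter (fun PQ => ¬ (n+1) ∈ PQ.1))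
    (p := fun PQ => (n+1) ∈ PQ.2)
  rw [filter_filter, filter_filter] at h2 h3
  omega

lemma recEq2 {n a : ℕ} (ha : 1 ≤ a) :
    (pairsN (n+1) a a).card = (pairsN n a a).card + (pairsN n a (a-1)).card := by
  rw [card_split4]
  rw [Ptop_empty1 le_rfl, Ptop_empty2 le_rfl, P01 ha le_rfl, P00 le_rfl]
  simp only [card_empty]
  omega

lemma recEq {n a b : ℕ} (hb : 1 ≤ b) (hba : b + 1 ≤ a) :
    (pairsN (n+1) a b).card = (pairsN n a b).card + (pairsN n a (b-1)).card
      + (pairsN n (a-1) b).card + (pairsN n (a-1) (b-1)).card := by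
  rw [card_split4, P11 hb hba, P10 hba, P01 hb (by omega), P00 (by omega)]
  omega

lemma pairsN_zero (n a : ℕ) : (pairsN n a 0).card = n.choose a := by
  have h : (pairsN n a 0).card = ((Icc 1 n).powersetCard a).card := by
    apply card_nbij_old (i := fun PQ => PQ.1) (j := fun P => (P, ∅))
    · intro PQ hPQ
      rw [mem_pairsN] at hPQ
      rw [mem_powersetCard]
      exact ⟨hPQ.1, hPQ.2.2.1⟩
    · intro P hP
      rw [mem_powersetCard] at hP
      rw [mem_pairsN]
      exact ⟨hP.1, empty_subset _, hP.2, card_empty, fun i _ => by simp⟩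
    · intro PQ hPQ
      rw [mem_pairsN] at hPQ
      have : PQ.2 = ∅ := card_eq_zero.mp hPQ.2.2.2.1
      exact Prod.ext rfl this.symm
    · intro P hP
      rfl
  rw [h, card_powersetCard, Nat.card_Icc]
  norm_num
lemma chooseZ (m k : ℕ) :
    (((m+1).choose (k+1) : ℕ) : ℤ) = (m.choose k : ℤ) + (m.choose (k+1) : ℤ) := by
  exact_mod_cast Nat.choose_succ_succ m k

lemma pairsN_one_empty {a b : ℕ} (hb : 1 ≤ b) : pairsN 1 a b = ∅ := by
  rw [eq_empty_iff_forall_notMem]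
  intro PQ h
  rw [mem_pairsN] at h
  obtain ⟨hP, hQ, hca, hcb, hdom⟩ := h
  have hd := hdom 1 (by simp)
  have h1 : PQ.2 ∩ Icc 1 1 = PQ.2 := inter_eq_left.mpr hQ
  have h2 : Icc 1 (1-1) = (∅ : Finset ℕ) := by simp
  rw [h1, h2, inter_empty, card_empty, hcb] at hd
  omega

lemma pairsN_card : ∀ (n a b : ℕ), 1 ≤ b → b ≤ a →
    ((pairsN (n+1) a b).card : ℤ)
      = ((n+1).choose a : ℤ) * (n.choose b : ℤ)
        - ((n+1).choose (a+1) : ℤ) * (n.choose (b-1) : ℤ) := by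
  intro n
  induction n with
  | zero =>
    intro a b hb hba
    rw [pairsN_one_empty hb]
    have h1 : Nat.choose 0 b = 0 := Nat.choose_eq_zero_of_lt (by omega)
    have h2 : Nat.choose 1 (a+1) = 0 := Nat.choose_eq_zero_of_lt (by omega)
    rw [h1, h2]
    simp
  | succ n IH =>
    intro a b hb hba
    rcases Nat.lt_or_ge b a with hlt | hge
    · -- b < a
      rcases Nat.lt_or_ge b 2 with hb1 | hb2
      · -- b = 1
        have hbe : b = 1 := by omega
        subst hbe
        obtain ⟨c, rfl⟩ : ∃ c, a = c + 2 := ⟨a - 2, by omega⟩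
        rw [recEq (by omega) (by omega)]
        have e1 : (1 : ℕ) - 1 = 0 := rfl
        have e2 : c + 2 - 1 = c + 1 := by omega
        rw [e1, e2]
        push_cast
        rw [pairsN_zero, pairsN_zero]
        rw [IH (c+2) 1 le_rfl (by omega), IH (c+1) 1 le_rfl (by omega)]
        have pA : (((n+2).choose (c+2) : ℕ) : ℤ)
            = ((n+1).choose (c+1) : ℤ) + ((n+1).choose (c+2) : ℤ) := chooseZ (n+1) (c+1)
        have pB : (((n+2).choose (c+2+1) : ℕ) : ℤ)
            = ((n+1).choose (c+2) : ℤ) + ((n+1).choose (c+2+1) : ℤ) := chooseZ (n+1) (c+2)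
        rw [e1, pA, pB]
        simp only [Nat.choose_one_right, Nat.choose_zero_right]
        push_cast
        ring
      · -- 2 ≤ b < a
        obtain ⟨e, rfl⟩ : ∃ e, b = e + 2 := ⟨b - 2, by omega⟩
        obtain ⟨f, rfl⟩ : ∃ f, a = e + f + 3 := ⟨a - e - 3, by omega⟩
        rw [recEq (by omega) (by omega)]
        have e1 : e + 2 - 1 = e + 1 := by omega
        have e2 : e + f + 3 - 1 = e + f + 2 := by omega
        have e3 : e + 1 - 1 = e := by omega
        rw [e1, e2]
        push_cast
        rw [IH (e+f+3) (e+2) (by omega) (by omega), IH (e+f+3) (e+1) (by omega) (by omega),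
            IH (e+f+2) (e+2) (by omega) (by omega), IH (e+f+2) (e+1) (by omega) (by omega)]
        rw [e1, e3]
        have pA : (((n+2).choose (e+f+3) : ℕ) : ℤ)
            = ((n+1).choose (e+f+2) : ℤ) + ((n+1).choose (e+f+3) : ℤ) := chooseZ (n+1) (e+f+2)
        have pB : (((n+2).choose (e+f+3+1) : ℕ) : ℤ)
            = ((n+1).choose (e+f+3) : ℤ) + ((n+1).choose (e+f+3+1) : ℤ) := chooseZ (n+1) (e+f+3)
        have pC : (((n+1).choose (e+2) : ℕ) : ℤ)
            = (n.choose (e+1) : ℤ) + (n.choose (e+2) : ℤ) := chooseZ n (e+1)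
        have pD : (((n+1).choose (e+1) : ℕ) : ℤ)
            = (n.choose e : ℤ) + (n.choose (e+1) : ℤ) := chooseZ n e
        have pE : (((n+1).choose (e+f+3) : ℕ) : ℤ)
            = (n.choose (e+f+2) : ℤ) + (n.choose (e+f+3) : ℤ) := chooseZ n (e+f+2)
        have pF : (((n+1).choose (e+f+4) : ℕ) : ℤ)
            = (n.choose (e+f+3) : ℤ) + (n.choose (e+f+4) : ℤ) := chooseZ n (e+f+3)
        rw [pA, pB, pC, pD]
        ring
    · -- b = a
      have hbe : b = a := by omega
      subst hbe
      rcases Nat.lt_or_ge b 2 with hb1 | hb2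
      · -- a = b = 1
        have hbe : b = 1 := by omega
        subst hbe
        rw [recEq2 le_rfl]
        have e1 : (1 : ℕ) - 1 = 0 := rfl
        rw [e1]
        push_cast
        rw [pairsN_zero]
        rw [IH 1 1 le_rfl le_rfl]
        rw [e1]
        have pB : (((n+2).choose 2 : ℕ) : ℤ)
            = ((n+1).choose 1 : ℤ) + ((n+1).choose 2 : ℤ) := chooseZ (n+1) 1
        have pC : (((n+1).choose 2 : ℕ) : ℤ)
            = (n.choose 1 : ℤ) + (n.choose 2 : ℤ) := chooseZ n 1
        norm_num
        rw [pB]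
        simp only [Nat.choose_one_right, Nat.choose_zero_right]
        push_cast
        ring
      · -- a = b ≥ 2
        obtain ⟨e, rfl⟩ : ∃ e, b = e + 2 := ⟨b - 2, by omega⟩
        rw [recEq2 (by omega)]
        have e1 : e + 2 - 1 = e + 1 := by omega
        rw [e1]
        push_cast
        rw [IH (e+2) (e+2) (by omega) le_rfl, IH (e+2) (e+1) (by omega) (by omega)]
        rw [e1]
        have e3 : e + 1 - 1 = e := by omega
        rw [e3]
        have pA : (((n+2).choose (e+2) : ℕ) : ℤ)
            = ((n+1).choose (e+1) : ℤ) + ((n+1).choose (e+2) : ℤ) := chooseZ (n+1) (e+1)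
        have pB : (((n+2).choose (e+2+1) : ℕ) : ℤ)
            = ((n+1).choose (e+2) : ℤ) + ((n+1).choose (e+2+1) : ℤ) := chooseZ (n+1) (e+2)
        have pC : (((n+1).choose (e+2) : ℕ) : ℤ)
            = (n.choose (e+1) : ℤ) + (n.choose (e+2) : ℤ) := chooseZ n (e+1)
        have pD : (((n+1).choose (e+1) : ℕ) : ℤ)
            = (n.choose e : ℤ) + (n.choose (e+1) : ℤ) := chooseZ n e
        rw [pA, pB, pC, pD]
        ring
end NarayanaProof

open Finset NarayanaProof

/-- The number of Dyck paths of length `2n` with exactly `k` down-steps at even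
indices is the Narayana number `N(n,k) = (1/n)·C(n,k)·C(n,k−1)` (stated with
both sides multiplied by `n`). -/
theorem card_dyck_evenDownSteps_eq_narayana (n k : ℕ) (hn : 1 ≤ n)
    (hk1 : 1 ≤ k) (hkn : k ≤ n) :
    n * ((dyck n).filter (fun S =>
        (((Finset.Icc 1 (2 * n)) \ S).filter (fun i => Even i)).card = k)).card =
      n.choose k * n.choose (k - 1) := by
  rw [cardA n k hkn]
  rcases Nat.lt_or_ge k n with hlt | hge
  · -- k < n
    obtain ⟨n', rfl⟩ : ∃ n', n = n' + 1 := ⟨n - 1, by omega⟩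
    have hm1 : 1 ≤ n' + 1 - k := by omega
    have hcard := pairsN_card n' (n'+1-k) (n'+1-k) hm1 le_rfl
    have s1 : (n'+1).choose (n'+1-k) = (n'+1).choose k := Nat.choose_symm (by omega)
    have s2 : n'.choose (n'+1-k) = n'.choose (k-1) := by
      have e : n'+1-k = n' - (k-1) := by omega
      rw [e]
      exact Nat.choose_symm (by omega)
    have s3 : (n'+1).choose ((n'+1-k)+1) = (n'+1).choose (k-1) := by
      have e : (n'+1-k)+1 = (n'+1) - (k-1) := by omega
      rw [e]
      exact Nat.choose_symm (by omega)
    have s4 : n'.choose ((n'+1-k)-1) = n'.choose k := by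
      have e : (n'+1-k)-1 = n' - k := by omega
      rw [e]
      exact Nat.choose_symm (by omega)
    rw [s1, s2, s3, s4] at hcard
    zify
    rw [hcard]
    have ek : k - 1 + 1 = k := by omega
    have f1 : (n'+1) * n'.choose (k-1) = (n'+1).choose k * k := by
      have := Nat.add_one_mul_choose_eq n' (k-1)
      rw [ek] at this
      exact_mod_cast this
    have f2 : n'.choose k * (n'+1) = (n'+1).choose k * (n'+1-k) :=
      Nat.choose_mul_succ_eq n' k
    have f3 : (n'+1).choose k * k = (n'+1).choose (k-1) * ((n'+1) - (k-1)) := by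
      have := Nat.choose_succ_right_eq (n'+1) (k-1)
      rw [ek] at this
      exact this
    have hk2 : k ≤ n' + 1 := by omega
    have hk3 : k - 1 ≤ n' + 1 := by omega
    zify [hk2, hk3, hk1] at f1 f2 f3
    linear_combination ((n'+1).choose k : ℤ) * f1 - ((n'+1).choose (k-1) : ℤ) * f2
      + ((n'+1).choose k : ℤ) * f3
  · -- k = n
    have hke : k = n := by omega
    subst hke
    have e0 : k - k = 0 := by omega
    rw [e0, pairsN_zero, Nat.choose_zero_right, Nat.choose_self]
    have s : k.choose (k-1) = k.choose 1 := by
      have e : k - 1 = k - 1 := rfl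
      calc k.choose (k-1) = k.choose (k - 1) := rfl
        _ = k.choose 1 := by
            have := Nat.choose_symm (n := k) (k := 1) (by omega)
            exact this
    rw [s, Nat.choose_one_right]
    omega
end

section
/- The Narayana distribution has mean (n+1)/2 and variance (n+1)(n−1)/(4(2n−1)); that is, with p(k) = N(n,k)/C_n for 1 ≤ k ≤ n, one has Σ_{k=1}^n k·p(k) = (n+1)/2 and Σ_{k=1}^n (k − (n+1)/2)²·p(k) = (n+1)(n−1)/(4(2n−1)), and moreover (n+1)(n−1)/(4(2n−1)) ≥ n/8 for every n ≥ 2. -/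
/-- The Narayana number `N(n,k) = (1/n)·C(n,k)·C(n,k−1)`, as a real number. -/
noncomputable def narayana (n k : ℕ) : ℝ :=
  ((n.choose k : ℝ) * (n.choose (k - 1) : ℝ)) / (n : ℝ)

/-- The Catalan number `C_n = C(2n,n)/(n+1)`, as a real number. -/
noncomputable def catalanR (n : ℕ) : ℝ := ((2 * n).choose n : ℝ) / ((n : ℝ) + 1)


open Finset

/-- Vandermonde as a range sum. -/
lemma vand (a b m : ℕ) :
    ∑ j ∈ range (m + 1), a.choose j * b.choose (m - j) = (a + b).choose m := by
  rw [Nat.add_choose_eq, Finset.Nat.sum_antidiagonal_eq_sum_range_succ_mk]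

lemma L1 (m : ℕ) (hm : 1 ≤ m) :
    ∑ j ∈ range m, m.choose (j + 1) * m.choose j = (2 * m).choose (m - 1) := by
  have h : ∀ j ∈ range m, m.choose (j + 1) * m.choose j
      = m.choose j * m.choose (m - 1 - j) := by
    intro j hj
    rw [mem_range] at hj
    have h1 : m - 1 - j = m - (j + 1) := by omega
    rw [h1, Nat.choose_symm (by omega), mul_comm]
  rw [Finset.sum_congr rfl h]
  have := vand m m (m - 1)
  rw [show m - 1 + 1 = m by omega] at this
  rw [this]; congr 1; omega

lemma Laux (m : ℕ) (hm : 1 ≤ m) :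
    ∑ j ∈ range m, (m - 1).choose j * m.choose j = (2 * m - 1).choose (m - 1) := by
  have h : ∀ j ∈ range m, (m - 1).choose j * m.choose j
      = (m - 1).choose j * m.choose (m - j) := by
    intro j hj
    rw [mem_range] at hj
    rw [Nat.choose_symm (by omega)]
  rw [Finset.sum_congr rfl h]
  have hv := vand (m - 1) m m
  have hstep : ∑ j ∈ range (m + 1), (m - 1).choose j * m.choose (m - j)
      = ∑ j ∈ range m, (m - 1).choose j * m.choose (m - j) + (m-1).choose m * m.choose (m - m) := Finset.sum_range_succ _ _
  rw [Nat.choose_eq_zero_of_lt (by omega), zero_mul, add_zero] at hstep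
  rw [← hstep, hv, show m - 1 + m = 2 * m - 1 by omega,
    show (2*m-1).choose (m-1) = (2*m-1).choose (2*m-1-m) from by congr 1; omega,
    Nat.choose_symm (by omega)]

lemma L2 (m : ℕ) (hm : 1 ≤ m) :
    ∑ j ∈ range m, (j + 1) * (m.choose (j + 1) * m.choose j)
      = m * (2 * m - 1).choose (m - 1) := by
  have h : ∀ j ∈ range m, (j + 1) * (m.choose (j + 1) * m.choose j)
      = m * ((m - 1).choose j * m.choose j) := by
    intro j hj
    have := Nat.add_one_mul_choose_eq (m - 1) j
    rw [show m - 1 + 1 = m by omega] at this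
    -- this : m * (m-1).choose j = m.choose (j+1) * (j+1)
    calc (j + 1) * (m.choose (j + 1) * m.choose j)
        = (m.choose (j+1) * (j+1)) * m.choose j := by ring
      _ = (m * (m-1).choose j) * m.choose j := by rw [← this]
      _ = m * ((m - 1).choose j * m.choose j) := by ring
  rw [Finset.sum_congr rfl h, ← Finset.mul_sum, Laux m hm]

lemma L3 (m : ℕ) (hm : 2 ≤ m) :
    ∑ j ∈ range m, (j + 1)^2 * (m.choose (j + 1) * m.choose j)
      = m * (m * (2*m - 2).choose (m - 2) + (2 * m - 1).choose (m - 1)) := by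
  have h : ∀ j ∈ range m, (j + 1)^2 * (m.choose (j + 1) * m.choose j)
      = m * (j * ((m - 1).choose j * m.choose j) + (m-1).choose j * m.choose j) := by
    intro j hj
    have := Nat.add_one_mul_choose_eq (m - 1) j
    rw [show m - 1 + 1 = m by omega] at this
    calc (j + 1)^2 * (m.choose (j + 1) * m.choose j)
        = (j+1) * ((m.choose (j+1) * (j+1)) * m.choose j) := by ring
      _ = (j+1) * ((m * (m-1).choose j) * m.choose j) := by rw [← this]
      _ = m * (j * ((m - 1).choose j * m.choose j) + (m-1).choose j * m.choose j) := by ring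
  rw [Finset.sum_congr rfl h, ← Finset.mul_sum, Finset.sum_add_distrib, Laux m (by omega)]
  congr 2
  -- ⊢ ∑ j ∈ range m, j * ((m-1).choose j * m.choose j) = m * (2*m-2).choose (m-2)
  rw [show m = (m - 1) + 1 by omega, Finset.sum_range_succ']
  rw [show (m - 1) + 1 = m by omega]
  simp only [Nat.zero_eq, zero_mul, add_zero]
  have h2 : ∀ i ∈ range (m - 1), (i + 1) * ((m-1).choose (i+1) * m.choose (i+1))
      = m * ((m-1).choose (i+1) * (m-1).choose i) := by
    intro i hi
    have := Nat.add_one_mul_choose_eq (m - 1) i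
    rw [show m - 1 + 1 = m by omega] at this
    calc (i + 1) * ((m-1).choose (i+1) * m.choose (i+1))
        = (m.choose (i+1) * (i+1)) * (m-1).choose (i+1) := by ring
      _ = (m * (m-1).choose i) * (m-1).choose (i+1) := by rw [← this]
      _ = m * ((m-1).choose (i+1) * (m-1).choose i) := by ring
  rw [Finset.sum_congr rfl h2, ← Finset.mul_sum, L1 (m-1) (by omega)]
  congr 2 <;> omega

/-- The Narayana distribution `p(k) = N(n,k)/C_n` on `{1,…,n}` has mean
`(n+1)/2` and variance `(n+1)(n−1)/(4(2n−1))`, and the variance is at least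
`n/8` for `n ≥ 2`. -/
theorem narayana_mean_variance (n : ℕ) (hn : 1 ≤ n) :
    (∑ k ∈ Finset.Icc 1 n, (k : ℝ) * (narayana n k / catalanR n)) =
        ((n : ℝ) + 1) / 2 ∧
    (∑ k ∈ Finset.Icc 1 n,
        ((k : ℝ) - ((n : ℝ) + 1) / 2) ^ 2 * (narayana n k / catalanR n)) =
        ((n : ℝ) + 1) * ((n : ℝ) - 1) / (4 * (2 * (n : ℝ) - 1)) ∧
    (2 ≤ n →
      ((n : ℝ) + 1) * ((n : ℝ) - 1) / (4 * (2 * (n : ℝ) - 1)) ≥ (n : ℝ) / 8) := by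
  rcases eq_or_lt_of_le hn with h1 | h2
  · -- n = 1
    subst h1
    norm_num [narayana, catalanR, Finset.Icc_self, Finset.sum_singleton]
  · -- n ≥ 2
    obtain ⟨m, rfl⟩ : ∃ m, n = m + 2 := ⟨n - 2, by omega⟩
    set n := m + 2 with hn_def
    have hn2 : 2 ≤ n := by omega
    have hnR : (2:ℝ) ≤ (n:ℝ) := by exact_mod_cast hn2
    have hn0 : (n:ℝ) ≠ 0 := by positivity
    set a : ℝ := ((2 * n).choose n : ℝ) with ha_def
    set a' : ℝ := ((2 * n).choose (n - 1) : ℝ) with ha'_def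
    set b : ℝ := ((2 * n - 1).choose (n - 1) : ℝ) with hb_def
    set c1 : ℝ := ((2 * n - 2).choose (n - 2) : ℝ) with hc1_def
    set c2 : ℝ := ((2 * n - 2).choose (n - 1) : ℝ) with hc2_def
    have hc2pos : 0 < c2 := by
      rw [hc2_def]
      exact_mod_cast Nat.choose_pos (by omega)
    have f1 : a * n = a' * ((n:ℝ) + 1) := by
      have h := Nat.choose_succ_right_eq (2 * n) (n - 1)
      rw [show n - 1 + 1 = n by omega, show 2 * n - (n - 1) = n + 1 by omega] at h
      rw [ha_def, ha'_def]
      exact_mod_cast h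
    have f2 : a = 2 * b := by
      have h : (2 * n).choose n = (2*n-1).choose (n-1) + (2*n-1).choose n := by
        rw [show 2*n-1 = 2*m+3 by omega, show n - 1 = m+1 from rfl,
          show 2*n = (2*m+3)+1 by omega, show n = m + 2 from rfl]
        exact Nat.choose_succ_succ (2*m+3) (m+1)
      have hsymm : (2*n-1).choose n = (2*n-1).choose (n-1) := by
        rw [show n - 1 = 2*n-1-n by omega]
        exact (Nat.choose_symm (show n ≤ 2*n-1 by omega)).symm
      rw [hsymm] at h
      rw [ha_def, hb_def]
      push_cast [h]; ring
    have f3 : b = c1 + c2 := by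
      have h : (2*n-1).choose (n-1) = (2*n-2).choose (n-2) + (2*n-2).choose (n-1) := by
        rw [show 2*n-1 = (2*m+2)+1 by omega, show 2*n-2 = 2*m+2 by omega,
          show n - 1 = m+1 from rfl, show n - 2 = m from rfl]
        exact Nat.choose_succ_succ (2*m+2) m
      rw [hb_def, hc1_def, hc2_def]
      exact_mod_cast h
    have f4 : (n:ℝ) * c1 = ((n:ℝ) - 1) * c2 := by
      have h := Nat.choose_succ_right_eq (2*n-2) (n-2)
      rw [show n - 2 + 1 = n - 1 by omega, show 2*n-2 - (n-2) = n by omega] at h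
      have h' : c2 * ((n:ℝ) - 1) = c1 * n := by
        rw [hc1_def, hc2_def, show ((n:ℝ) - 1) = ((n - 1 : ℕ) : ℝ) by push_cast [hn_def]; ring]
        exact_mod_cast h
      linarith [h']
    have hb_c2 : b = (2 * (n:ℝ) - 1) * c2 / n := by
      have hc1 : c1 = ((n:ℝ) - 1) * c2 / n := by
        field_simp
        linarith [f4]
      rw [f3, hc1]; field_simp; ring
    have ha_c2 : a = 2 * (2 * (n:ℝ) - 1) * c2 / n := by
      rw [f2, hb_c2]; ring
    have hbpos : 0 < b := by
      rw [hb_c2]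
      have h1 : (0:ℝ) < 2 * (n:ℝ) - 1 := by linarith
      have h2 : (0:ℝ) < (n:ℝ) := by linarith
      positivity
    have hapos : 0 < a := by rw [f2]; linarith
    have ha0 : a ≠ 0 := ne_of_gt hapos
    have hb0 : b ≠ 0 := ne_of_gt hbpos
    have hconv : ∀ f : ℕ → ℝ, (∑ k ∈ Finset.Icc 1 n, f k) = ∑ j ∈ range n, f (j + 1) := by
      intro f
      rw [← Finset.Ico_add_one_right_eq_Icc, Finset.sum_Ico_eq_sum_range]
      exact Finset.sum_congr (by norm_num) (fun j _ => by rw [add_comm])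
    have hq : ∀ j : ℕ, narayana n (j+1) / catalanR n
        = ((n.choose (j+1) * n.choose j : ℕ) : ℝ) * (((n:ℝ) + 1) / ((n:ℝ) * a)) := by
      intro j
      rw [narayana, catalanR, show (j + 1) - 1 = j from rfl, ← ha_def]
      push_cast
      field_simp
      try ring
    have S0 : (∑ k ∈ Finset.Icc 1 n, narayana n k / catalanR n) = 1 := by
      rw [hconv (fun k => narayana n k / catalanR n)]
      simp only [hq]
      rw [← Finset.sum_mul, ← Nat.cast_sum, L1 n (by omega), ← ha'_def]
      rw [show a' * (((n:ℝ) + 1) / ((n:ℝ) * a)) = (a' * ((n:ℝ)+1)) / ((n:ℝ)*a) by ring,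
        div_eq_one_iff_eq (by positivity : ((n:ℝ) * a) ≠ 0)]
      linarith [f1]
    have S1 : (∑ k ∈ Finset.Icc 1 n, (k:ℝ) * (narayana n k / catalanR n))
        = ((n:ℝ) + 1) / 2 := by
      rw [hconv (fun k => (k:ℝ) * (narayana n k / catalanR n))]
      simp only [hq]
      have hpt : ∀ j ∈ range n, (((j+1 : ℕ)):ℝ) * (((n.choose (j+1) * n.choose j : ℕ) : ℝ)
            * (((n:ℝ) + 1) / ((n:ℝ) * a)))
          = (((j+1) * (n.choose (j+1) * n.choose j) : ℕ) : ℝ) * (((n:ℝ) + 1) / ((n:ℝ) * a)) := by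
        intro j _; push_cast; ring
      rw [Finset.sum_congr rfl hpt, ← Finset.sum_mul, ← Nat.cast_sum, L2 n (by omega),
        Nat.cast_mul, ← hb_def, f2]
      field_simp
    have S2 : (∑ k ∈ Finset.Icc 1 n, (k:ℝ)^2 * (narayana n k / catalanR n))
        = ((n:ℝ) + 1) * ((n:ℝ)^2 + (n:ℝ) - 1) / (2 * (2 * (n:ℝ) - 1)) := by
      rw [hconv (fun k => (k:ℝ)^2 * (narayana n k / catalanR n))]
      simp only [hq]
      have hpt : ∀ j ∈ range n, (((j+1 : ℕ)):ℝ)^2 * (((n.choose (j+1) * n.choose j : ℕ) : ℝ)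
            * (((n:ℝ) + 1) / ((n:ℝ) * a)))
          = (((j+1)^2 * (n.choose (j+1) * n.choose j) : ℕ) : ℝ) * (((n:ℝ) + 1) / ((n:ℝ) * a)) := by
        intro j _; push_cast; ring
      rw [Finset.sum_congr rfl hpt, ← Finset.sum_mul, ← Nat.cast_sum, L3 n (by omega)]
      have hcast : ((n * (n * (2*n-2).choose (n-2) + (2*n-1).choose (n-1)) : ℕ) : ℝ)
          = (n:ℝ) * ((n:ℝ) * c1 + b) := by
        rw [hc1_def, hb_def]; push_cast; ring
      rw [hcast, f4, hb_c2, ha_c2]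
      have h2n1 : 2 * (n:ℝ) - 1 ≠ 0 := by linarith
      field_simp
      ring
    refine ⟨S1, ?_, ?_⟩
    · have hexp : ∀ k ∈ Finset.Icc 1 n,
          ((k:ℝ) - ((n:ℝ)+1)/2)^2 * (narayana n k / catalanR n)
          = (k:ℝ)^2 * (narayana n k / catalanR n)
            - (((n:ℝ)+1)) * ((k:ℝ) * (narayana n k / catalanR n))
            + (((n:ℝ)+1)/2)^2 * (narayana n k / catalanR n) := by
        intro k _; ring
      rw [Finset.sum_congr rfl hexp, Finset.sum_add_distrib, Finset.sum_sub_distrib,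
        ← Finset.mul_sum, ← Finset.mul_sum, S0, S1, S2]
      have h2n1 : 2 * (n:ℝ) - 1 ≠ 0 := by linarith
      have hx : (2 * (n:ℝ) - 1)⁻¹ * (2 * (n:ℝ) - 1) = 1 := inv_mul_cancel₀ h2n1
      simp only [div_eq_mul_inv, mul_inv]
      linear_combination ((n:ℝ) + 1) ^ 2 / 4 * hx
    · intro _
      rw [ge_iff_le, div_le_div_iff₀ (by norm_num) (by linarith)]
      nlinarith [hnR]
end

section
/- Every lattice path family satisfies the matroid basis exchange axiom: for every lattice path family L = L[S_A, S_B] on ground set {1,…,m}, all S, T ∈ L, and every e ∈ S \ T, there exists f ∈ T \ S such that (S \ {e}) ∪ {f} ∈ L. In particular, L is the set of bases of a matroid (the lattice path matroid L[A,B]) on ground set {1,…,m}. -/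
open scoped Classical

/-- The lattice path family `L[A,B]`: all `r`-element subsets `S` of `{1,…,m}` whose
partial counts lie between those of `A` and `B`. -/
noncomputable def latticeFamily (m r : ℕ) (A B : Finset ℕ) : Finset (Finset ℕ) :=
  (Finset.Icc 1 m).powerset.filter fun S =>
    S.card = r ∧ ∀ k ∈ Finset.Icc 1 m,
      (A ∩ Finset.Icc 1 k).card ≤ (S ∩ Finset.Icc 1 k).card ∧
      (S ∩ Finset.Icc 1 k).card ≤ (B ∩ Finset.Icc 1 k).card

lemma lpm_icc_split {e k : ℕ} (hek : e ≤ k) :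
    Finset.Icc 1 k = Finset.Icc 1 e ∪ Finset.Ioc e k := by
  ext x
  simp only [Finset.mem_Icc, Finset.mem_union, Finset.mem_Ioc]
  omega

lemma lpm_count_split (X : Finset ℕ) {e k : ℕ} (hek : e ≤ k) :
    (X ∩ Finset.Icc 1 k).card
      = (X ∩ Finset.Icc 1 e).card + (X ∩ Finset.Ioc e k).card := by
  rw [lpm_icc_split hek, Finset.inter_union_distrib_left,
    Finset.card_union_of_disjoint]
  refine Finset.disjoint_left.mpr ?_
  intro x hx hx'
  simp only [Finset.mem_inter, Finset.mem_Icc, Finset.mem_Ioc] at hx hx'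
  omega

lemma lpm_count_step (X : Finset ℕ) {e : ℕ} (h1 : 1 ≤ e) :
    (X ∩ Finset.Icc 1 e).card
      = (X ∩ Finset.Icc 1 (e - 1)).card + (if e ∈ X then 1 else 0) := by
  rw [lpm_count_split X (show e - 1 ≤ e by omega)]
  congr 1
  have h : Finset.Ioc (e - 1) e = {e} := by
    ext x; simp only [Finset.mem_Ioc, Finset.mem_singleton]; omega
  rw [h]
  by_cases hX : e ∈ X
  · rw [if_pos hX, Finset.inter_singleton_of_mem hX, Finset.card_singleton]
  · rw [if_neg hX, Finset.inter_singleton_of_notMem hX, Finset.card_empty]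

lemma lpm_card_exchange (S : Finset ℕ) (e f k : ℕ) (heS : e ∈ S) (hfS : f ∉ S)
    (he1 : 1 ≤ e) (hf1 : 1 ≤ f) :
    ((insert f (S.erase e)) ∩ Finset.Icc 1 k).card + (if e ≤ k then 1 else 0)
      = (S ∩ Finset.Icc 1 k).card + (if f ≤ k then 1 else 0) := by
  classical
  have hfe : f ≠ e := fun h => hfS (h ▸ heS)
  by_cases hf : f ≤ k
  · have hset : (insert f (S.erase e)) ∩ Finset.Icc 1 k
        = insert f ((S ∩ Finset.Icc 1 k).erase e) := by
      ext x
      simp only [Finset.mem_inter, Finset.mem_insert, Finset.mem_erase, Finset.mem_Icc]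
      constructor
      · rintro ⟨h | ⟨hx1, hx2⟩, h3⟩
        · exact Or.inl h
        · exact Or.inr ⟨hx1, hx2, h3⟩
      · rintro (rfl | ⟨hx1, hx2, hx3⟩)
        · exact ⟨Or.inl rfl, hf1, hf⟩
        · exact ⟨Or.inr ⟨hx1, hx2⟩, hx3⟩
    rw [hset, if_pos hf]
    have hfnot : f ∉ (S ∩ Finset.Icc 1 k).erase e := by
      intro h
      exact hfS (Finset.mem_inter.mp (Finset.mem_of_mem_erase h)).1
    rw [Finset.card_insert_of_notMem hfnot]
    by_cases hek : e ≤ k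
    · rw [if_pos hek]
      have heM : e ∈ S ∩ Finset.Icc 1 k := by
        simp only [Finset.mem_inter, Finset.mem_Icc]; exact ⟨heS, he1, hek⟩
      rw [Finset.card_erase_of_mem heM]
      have : 1 ≤ (S ∩ Finset.Icc 1 k).card := Finset.card_pos.mpr ⟨e, heM⟩
      omega
    · rw [if_neg hek]
      have heM : e ∉ S ∩ Finset.Icc 1 k := by
        simp only [Finset.mem_inter, Finset.mem_Icc]; intro h; exact hek h.2.2
      rw [Finset.erase_eq_of_notMem heM]
  · have hset : (insert f (S.erase e)) ∩ Finset.Icc 1 k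
        = (S ∩ Finset.Icc 1 k).erase e := by
      ext x
      simp only [Finset.mem_inter, Finset.mem_insert, Finset.mem_erase, Finset.mem_Icc]
      constructor
      · rintro ⟨h | ⟨hx1, hx2⟩, h3⟩
        · exact absurd h3.2 (h ▸ hf)
        · exact ⟨hx1, hx2, h3⟩
      · rintro ⟨hx1, hx2, hx3⟩
        exact ⟨Or.inr ⟨hx1, hx2⟩, hx3⟩
    rw [hset, if_neg hf]
    by_cases hek : e ≤ k
    · rw [if_pos hek]
      have heM : e ∈ S ∩ Finset.Icc 1 k := by
        simp only [Finset.mem_inter, Finset.mem_Icc]; exact ⟨heS, he1, hek⟩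
      rw [Finset.card_erase_of_mem heM]
      have : 1 ≤ (S ∩ Finset.Icc 1 k).card := Finset.card_pos.mpr ⟨e, heM⟩
      omega
    · rw [if_neg hek]
      have heM : e ∉ S ∩ Finset.Icc 1 k := by
        simp only [Finset.mem_inter, Finset.mem_Icc]; intro h; exact hek h.2.2
      rw [Finset.erase_eq_of_notMem heM]

/-- Lattice path families satisfy the matroid basis exchange axiom: for
`S, T ∈ L[A,B]` and `e ∈ S \ T` there is `f ∈ T \ S` with `S \ {e} ∪ {f} ∈ L[A,B]`. -/
theorem latticeFamily_exchange
    (m r : ℕ) (hm : 1 ≤ m) (hr : r ≤ m)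
    (A B : Finset ℕ) (hA : A ⊆ Finset.Icc 1 m) (hB : B ⊆ Finset.Icc 1 m)
    (hAcard : A.card = r) (hBcard : B.card = r)
    (hAB : ∀ k ∈ Finset.Icc 1 m,
      (A ∩ Finset.Icc 1 k).card ≤ (B ∩ Finset.Icc 1 k).card)
    (S T : Finset ℕ) (hS : S ∈ latticeFamily m r A B) (hT : T ∈ latticeFamily m r A B)
    (e : ℕ) (he : e ∈ S \ T) :
    ∃ f ∈ T \ S, insert f (S.erase e) ∈ latticeFamily m r A B := by
  classical
  simp only [latticeFamily, Finset.mem_filter, Finset.mem_powerset] at hS hT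
  obtain ⟨hSsub, hScard, hSbd⟩ := hS
  obtain ⟨hTsub, hTcard, hTbd⟩ := hT
  rw [Finset.mem_sdiff] at he
  obtain ⟨heS, heT⟩ := he
  have heIcc := Finset.mem_Icc.mp (hSsub heS)
  have he1 : 1 ≤ e := heIcc.1
  have hem : e ≤ m := heIcc.2
  have hSm : (S ∩ Finset.Icc 1 m).card = r := by
    rw [Finset.inter_eq_left.mpr hSsub, hScard]
  have hTm : (T ∩ Finset.Icc 1 m).card = r := by
    rw [Finset.inter_eq_left.mpr hTsub, hTcard]
  have hrpos : 0 < r := hScard ▸ Finset.card_pos.mpr ⟨e, heS⟩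
  by_cases hcase : (T ∩ Finset.Icc 1 e).card < (S ∩ Finset.Icc 1 e).card
  · -- Case A: pick f = min element of T \ S above e
    set F := (T \ S).filter (fun x => e < x) with hF
    have hex : F.Nonempty := by
      by_contra hne
      rw [Finset.not_nonempty_iff_eq_empty] at hne
      have hsub : T ∩ Finset.Ioc e m ⊆ S ∩ Finset.Ioc e m := by
        intro x hx
        rw [Finset.mem_inter] at hx ⊢
        refine ⟨?_, hx.2⟩
        by_contra hxS
        have hxF : x ∈ F := by
          rw [hF, Finset.mem_filter, Finset.mem_sdiff]
          exact ⟨⟨hx.1, hxS⟩, (Finset.mem_Ioc.mp hx.2).1⟩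
        rw [hne] at hxF
        exact absurd hxF (Finset.notMem_empty x)
      have hc := Finset.card_le_card hsub
      have h1 := lpm_count_split T hem
      have h2 := lpm_count_split S hem
      omega
    obtain ⟨hfTS, hef⟩ := Finset.mem_filter.mp (F.min'_mem hex)
    set f := F.min' hex with hfdef
    obtain ⟨hfT, hfS⟩ := Finset.mem_sdiff.mp hfTS
    have hf1 : 1 ≤ f := (Finset.mem_Icc.mp (hTsub hfT)).1
    have key : ∀ k, e ≤ k → k < f →
        (T ∩ Finset.Icc 1 k).card < (S ∩ Finset.Icc 1 k).card := by
      intro k hk1 hk2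
      have h1 := lpm_count_split T hk1
      have h2 := lpm_count_split S hk1
      have hsub : T ∩ Finset.Ioc e k ⊆ S ∩ Finset.Ioc e k := by
        intro x hx
        rw [Finset.mem_inter] at hx ⊢
        refine ⟨?_, hx.2⟩
        by_contra hxS
        have hxF : x ∈ F := by
          rw [hF, Finset.mem_filter, Finset.mem_sdiff]
          exact ⟨⟨hx.1, hxS⟩, (Finset.mem_Ioc.mp hx.2).1⟩
        have := F.min'_le x hxF
        have := (Finset.mem_Ioc.mp hx.2).2
        omega
      have hc := Finset.card_le_card hsub
      omega
    refine ⟨f, Finset.mem_sdiff.mpr ⟨hfT, hfS⟩, ?_⟩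
    simp only [latticeFamily, Finset.mem_filter, Finset.mem_powerset]
    refine ⟨?_, ?_, ?_⟩
    · intro x hx
      rcases Finset.mem_insert.mp hx with rfl | hx'
      · exact hTsub hfT
      · exact hSsub (Finset.mem_of_mem_erase hx')
    · have hfne : f ∉ S.erase e := fun h => hfS (Finset.mem_of_mem_erase h)
      rw [Finset.card_insert_of_notMem hfne, Finset.card_erase_of_mem heS, hScard]
      omega
    · intro k hk
      have hk' := Finset.mem_Icc.mp hk
      have hcex := lpm_card_exchange S e f k heS hfS he1 hf1
      have hSk := hSbd k hk
      have hTk := hTbd k hk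
      rcases le_or_gt e k with hek | hek
      · rcases le_or_gt f k with hfk | hfk
        · rw [if_pos hek, if_pos hfk] at hcex
          omega
        · rw [if_pos hek, if_neg (by omega)] at hcex
          have := key k hek hfk
          omega
      · rw [if_neg (by omega), if_neg (by omega)] at hcex
        omega
  · -- Case B: pick f = max element of T \ S below e
    push_neg at hcase
    have hstepS := lpm_count_step S he1
    have hstepT := lpm_count_step T he1
    rw [if_pos heS] at hstepS
    rw [if_neg heT] at hstepT
    set F := (T \ S).filter (fun x => x < e) with hF
    have hex : F.Nonempty := by
      by_contra hne
      rw [Finset.not_nonempty_iff_eq_empty] at hne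
      have hsub : T ∩ Finset.Icc 1 (e - 1) ⊆ S ∩ Finset.Icc 1 (e - 1) := by
        intro x hx
        rw [Finset.mem_inter] at hx ⊢
        refine ⟨?_, hx.2⟩
        by_contra hxS
        have hxF : x ∈ F := by
          rw [hF, Finset.mem_filter, Finset.mem_sdiff]
          refine ⟨⟨hx.1, hxS⟩, ?_⟩
          have := (Finset.mem_Icc.mp hx.2).2
          omega
        rw [hne] at hxF
        exact absurd hxF (Finset.notMem_empty x)
      have hc := Finset.card_le_card hsub
      omega
    obtain ⟨hfTS, hfe⟩ := Finset.mem_filter.mp (F.max'_mem hex)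
    set f := F.max' hex with hfdef
    obtain ⟨hfT, hfS⟩ := Finset.mem_sdiff.mp hfTS
    have hf1 : 1 ≤ f := (Finset.mem_Icc.mp (hTsub hfT)).1
    have key : ∀ k, f ≤ k → k < e →
        (S ∩ Finset.Icc 1 k).card < (T ∩ Finset.Icc 1 k).card := by
      intro k hk1 hk2
      have hke : k ≤ e - 1 := by omega
      have h1 := lpm_count_split T hke
      have h2 := lpm_count_split S hke
      have hsub : T ∩ Finset.Ioc k (e - 1) ⊆ S ∩ Finset.Ioc k (e - 1) := by
        intro x hx
        rw [Finset.mem_inter] at hx ⊢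
        refine ⟨?_, hx.2⟩
        by_contra hxS
        have hxF : x ∈ F := by
          rw [hF, Finset.mem_filter, Finset.mem_sdiff]
          refine ⟨⟨hx.1, hxS⟩, ?_⟩
          have := (Finset.mem_Ioc.mp hx.2).2
          omega
        have := F.le_max' x hxF
        have := (Finset.mem_Ioc.mp hx.2).1
        omega
      have hc := Finset.card_le_card hsub
      omega
    refine ⟨f, Finset.mem_sdiff.mpr ⟨hfT, hfS⟩, ?_⟩
    simp only [latticeFamily, Finset.mem_filter, Finset.mem_powerset]
    refine ⟨?_, ?_, ?_⟩
    · intro x hx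
      rcases Finset.mem_insert.mp hx with rfl | hx'
      · exact hTsub hfT
      · exact hSsub (Finset.mem_of_mem_erase hx')
    · have hfne : f ∉ S.erase e := fun h => hfS (Finset.mem_of_mem_erase h)
      rw [Finset.card_insert_of_notMem hfne, Finset.card_erase_of_mem heS, hScard]
      omega
    · intro k hk
      have hk' := Finset.mem_Icc.mp hk
      have hcex := lpm_card_exchange S e f k heS hfS he1 hf1
      have hSk := hSbd k hk
      have hTk := hTbd k hk
      rcases le_or_gt f k with hfk | hfk
      · rcases le_or_gt e k with hek | hek
        · rw [if_pos hek, if_pos hfk] at hcex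
          omega
        · rw [if_neg (by omega), if_pos hfk] at hcex
          have := key k hfk hek
          omega
      · rw [if_neg (by omega), if_neg (by omega)] at hcex
        omega
end
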